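/- arXiv:2003.01633 — 3 statements merged into one kernel-verified Lean document; each statement's English description precedes it below -/
import Mathlib

section
/- The maximal operator M_R associated with the Rubio de Francia basis R is not of weak type (1,1): for every constant C > 0 there exist f ∈ L¹(T^ω) and λ > 0 such that λ·m({g ∈ T^ω : M_R f(g) > λ}) > C·‖f‖_{L¹}. -/
open MeasureTheory Filter Topology Set
open scoped ENNReal

noncomputable section

/-- The one-dimensional torus `𝕋 = ℝ/ℤ`. -/
abbrev 𝕋 : Type := AddCircle (1 : ℝ)

/-- The infinite-dimensional torus `𝕋^ω`. -/
abbrev Tω : Type := ℕ → 𝕋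

/-- The normalized Haar measure `m` on `𝕋^ω` (which coincides with the countable
product of the Lebesgue probability measures on the factors). -/
def haarTω : Measure Tω := Measure.addHaarMeasure ⊤

/-- The metric `ρ(g,h) = ∑ₙ 2⁻ⁿ · min(|gₙ−hₙ|, 1−|gₙ−hₙ|)`; the norm on `AddCircle 1`
is exactly `min(|·|, 1−|·|)` of a representative. Coordinates are indexed from `0`. -/
def rho (g h : Tω) : ℝ := ∑' n : ℕ, (1 / 2 : ℝ) ^ (n + 1) * ‖g n - h n‖

/-- The diameter of a set with respect to `ρ`. -/
def diam (E : Set Tω) : ℝ := sSup (Set.image2 rho E E)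

/-- The average `f_E = m(E)⁻¹ ∫_E f dm`. -/
def avg (f : Tω → ℝ) (E : Set Tω) : ℝ := ⨍ x in E, f x ∂haarTω

/-- `B(g) = {B ∈ 𝓑 : g ∈ closure B}` (non-centered basis associated to a collection). -/
def basisOf (𝓑 : Set (Set Tω)) (g : Tω) : Set (Set Tω) := {B ∈ 𝓑 | g ∈ closure B}

/-- `M_B f (g) > lam`, i.e. `sup_{B ∈ bas g} |f_B| > lam`. -/
def maximalGT (bas : Tω → Set (Set Tω)) (f : Tω → ℝ) (g : Tω) (lam : ℝ) : Prop :=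
  ∃ B ∈ bas g, lam < |avg f B|

/-- `M_{B,r₀} f (g) > lam` for the truncated maximal operator. -/
def maximalTruncGT (bas : Tω → Set (Set Tω)) (r₀ : ℝ) (f : Tω → ℝ) (g : Tω) (lam : ℝ) :
    Prop :=
  ∃ B ∈ bas g, diam B < r₀ ∧ lam < |avg f B|

/-- A sequence `S` contracts to `g` (written `Sₙ ⇒ g`). -/
def ContractsTo (bas : Tω → Set (Set Tω)) (S : ℕ → Set Tω) (g : Tω) : Prop :=
  (∀ n, S n ∈ bas g) ∧ Tendsto (fun n => diam (S n)) atTop (𝓝 0)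

/-- A general differentiation basis: each `B ∈ bas g` is measurable, of strictly positive
measure, with `g` in its closure, and each `g` admits a contracting sequence. -/
def IsGeneralBasis (bas : Tω → Set (Set Tω)) : Prop :=
  (∀ g, ∀ B ∈ bas g, MeasurableSet B ∧ 0 < haarTω B ∧ g ∈ closure B) ∧
  (∀ g, ∃ S : ℕ → Set Tω, ContractsTo bas S g)

/-- `bas` differentiates `L¹(𝕋^ω)`. -/
def DifferentiatesL1 (bas : Tω → Set (Set Tω)) : Prop :=
  ∀ f : Tω → ℝ, Integrable f haarTω →
    ∀ᵐ g ∂haarTω, ∀ S : ℕ → Set Tω, ContractsTo bas S g →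
      Tendsto (fun n => avg f (S n)) atTop (𝓝 (f g))

/-- The maximal operator of `bas` is of weak type (1,1). -/
def WeakType11 (bas : Tω → Set (Set Tω)) : Prop :=
  ∃ C : ℝ, 0 < C ∧ ∀ f : Tω → ℝ, Integrable f haarTω → ∀ lam : ℝ, 0 < lam →
    lam * (haarTω {g | maximalGT bas f g lam}).toReal ≤ C * ∫ x, |f x| ∂haarTω

/-- An interval of `𝕋`: the image under the quotient map `ℝ → ℝ/ℤ` of an interval
of `ℝ` of length at most 1. -/
def IsArc (S : Set 𝕋) : Prop :=
  ∃ J : Set ℝ, J.OrdConnected ∧ (∃ a : ℝ, J ⊆ Set.Icc a (a + 1)) ∧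
    S = (fun x : ℝ => (x : 𝕋)) '' J

/-- An interval of `𝕋^ω`: a product of intervals of `𝕋`, all but finitely many
of which are the whole `𝕋`. -/
def IsBox (I : Set Tω) : Prop :=
  ∃ (s : Finset ℕ) (F : ℕ → Set 𝕋), (∀ n, IsArc (F n)) ∧ (∀ n ∉ s, F n = Set.univ) ∧
    I = Set.pi Set.univ F

/-- Conditions (B1)–(B3) for a collection of subsets of `𝕋^ω` of strictly positive
measure: (B1) every element is an interval; (B2) translation invariance;
(B3) elements of arbitrarily small diameter. -/
def SatisfiesB (𝓑 : Set (Set Tω)) : Prop :=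
  (∀ B ∈ 𝓑, 0 < haarTω B) ∧
  (∀ B ∈ 𝓑, IsBox B) ∧
  (∀ B ∈ 𝓑, ∀ g : Tω, (fun x => g + x) '' B ∈ 𝓑) ∧
  (∀ ε : ℝ, 0 < ε → ∃ B ∈ 𝓑, diam B < ε)

/-- The image in `𝕋` of the real interval `(0, l)`. -/
def arc (l : ℝ) : Set 𝕋 := (fun x : ℝ => (x : 𝕋)) '' Set.Ioo 0 l

/-- For `n = m² + r` with `m = ⌊√n⌋`, `0 ≤ r ≤ 2m`, this encodes the side of the
`i`-th coordinate (0-indexed) of `V_n`: `some k` means the side `(0, 2⁻ᵏ)`, and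
`none` means the whole `𝕋`. -/
def sideLen (n i : ℕ) : Option ℕ :=
  let m := Nat.sqrt n
  let r := n - m * m
  if r = 0 then (if i < m then some m else none)
  else if r ≤ m then (if i < m then some m else if i = m then some r else none)
  else (if i < r - m then some (m + 1) else if i < m + 1 then some m else none)

/-- The open interval `V_n ⊆ 𝕋^ω`. -/
def Vcell (n : ℕ) : Set Tω :=
  Set.pi Set.univ fun i => match sideLen n i with
    | some k => arc ((2 : ℝ)⁻¹ ^ k)
    | none => Set.univ

/-- The Rubio de Francia basis `R = {g + Vₙ : n ≥ 1, g ∈ 𝕋^ω}`. -/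
def RdF : Set (Set Tω) := {S | ∃ n : ℕ, 1 ≤ n ∧ ∃ g : Tω, S = (fun x => g + x) '' Vcell n}

/-- `δ_k^B = sup{ m(E) : E measurable, ∃ f ∈ L¹, λ > 0, M_B f > λ on E and
λ·m(E) > 2^k·‖f‖₁ }` (with `sup ∅ = 0`). -/
def deltaK (bas : Tω → Set (Set Tω)) (k : ℕ) : ℝ≥0∞ :=
  sSup {v : ℝ≥0∞ | ∃ E : Set Tω, MeasurableSet E ∧ v = haarTω E ∧
    ∃ f : Tω → ℝ, Integrable f haarTω ∧ ∃ lam : ℝ, 0 < lam ∧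
      (∀ g ∈ E, maximalGT bas f g lam) ∧
      ENNReal.ofReal ((2 : ℝ) ^ k * ∫ x, |f x| ∂haarTω) < ENNReal.ofReal lam * haarTω E}

/-- `δ̃_k^B`: as `δ_k^B`, with `M_B` replaced by the truncated operator `M_{B,α_k}`. -/
def deltaTildeK (bas : Tω → Set (Set Tω)) (α : ℕ → ℝ) (k : ℕ) : ℝ≥0∞ :=
  sSup {v : ℝ≥0∞ | ∃ E : Set Tω, MeasurableSet E ∧ v = haarTω E ∧
    ∃ f : Tω → ℝ, Integrable f haarTω ∧ ∃ lam : ℝ, 0 < lam ∧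
      (∀ g ∈ E, maximalTruncGT bas (α k) f g lam) ∧
      ENNReal.ofReal ((2 : ℝ) ^ k * ∫ x, |f x| ∂haarTω) < ENNReal.ofReal lam * haarTω E}

/-- Condition (M). -/
def CondM (bas : Tω → Set (Set Tω)) : Prop :=
  ∃ F : Set Tω, haarTω Fᶜ = 0 ∧ ∀ g ∈ F, ∀ ε : ℝ, 0 < ε → ∃ δ : ℝ, 0 < δ ∧
    ∀ E ∈ bas g, haarTω E < ENNReal.ofReal δ → diam E < ε

instance : Fact ((0 : ℝ) < 1) := ⟨one_pos⟩

/-- The canonical representative in `[0,1)` of a point of `𝕋`. -/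
def rep (x : 𝕋) : ℝ := ((AddCircle.equivIco 1 0 x : Set.Ico (0 : ℝ) (0 + 1)) : ℝ)

/-- The cylinder set over the coordinates `K+1, …, K+(L+1)²` (paper numbering, i.e.
0-indexed coordinates `K, …, K+(L+1)²-1`) determined by `S ⊆ [0,1)^{(L+1)²}`. -/
def cylinder (K L : ℕ) (S : Set (Fin ((L + 1) ^ 2) → ℝ)) : Set Tω :=
  {g | (fun j : Fin ((L + 1) ^ 2) => rep (g (K + (j : ℕ)))) ∈ S}

/-- `U_n = (0,2⁻ⁿ)ⁿ × ∏_{i>n} 𝕋`. -/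
def Ucell (n : ℕ) : Set Tω :=
  Set.pi Set.univ fun i => if i < n then arc ((2 : ℝ)⁻¹ ^ n) else Set.univ

/-- `e_{n,i}`: the element whose `i`-th coordinate (0-indexed) is `2⁻ⁿ`, others `0`. -/
def evec (n i : ℕ) : Tω := fun j => if j = i then (((2 : ℝ)⁻¹ ^ n : ℝ) : 𝕋) else 0

/-- `U_{n,i} = U_n ∪ (e_{n,i} + U_n)`. -/
def Uni (n i : ℕ) : Set Tω := Ucell n ∪ ((fun x => evec n i + x) '' Ucell n)

/-- The collection `D₀ = {U_{n,i} : n ≥ 1, 1 ≤ i ≤ n}` (0-indexed: `i < n`). -/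
def D0 : Set (Set Tω) := {S | ∃ n : ℕ, 1 ≤ n ∧ ∃ i : ℕ, i < n ∧ S = Uni n i}

/-- The open box `∏ᵢ (0, αᵢ) ⊆ ℝ^{n²}`. -/
def box (n : ℕ) (α : Fin (n ^ 2) → ℝ) : Set (Fin (n ^ 2) → ℝ) :=
  Set.pi Set.univ fun i => Set.Ioo 0 (α i)

/-- The dilated box `(1+1/n)·∏ᵢ (0, αᵢ)`. -/
def bigBox (n : ℕ) (α : Fin (n ^ 2) → ℝ) : Set (Fin (n ^ 2) → ℝ) :=
  Set.pi Set.univ fun i => Set.Ioo 0 ((1 + 1 / (n : ℝ)) * α i)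

open Classical in
/-- The set `J` of points of the dilated box having at least `4n` coordinates `xᵢ` with
`xᵢ ∈ [αᵢ, (1+1/n)αᵢ)`. -/
def Jset (n : ℕ) (α : Fin (n ^ 2) → ℝ) : Set (Fin (n ^ 2) → ℝ) :=
  {x ∈ bigBox n α |
    4 * n ≤ (Finset.univ.filter fun i => x i ∈ Set.Ico (α i) ((1 + 1 / (n : ℝ)) * α i)).card}

end

section RdFAuxSec
namespace RdFAux

instance : Measure.IsAddLeftInvariant haarTω := by unfold haarTω; infer_instance
instance : IsProbabilityMeasure haarTω := by
  constructor
  rw [haarTω, ← TopologicalSpace.PositiveCompacts.coe_top]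
  exact Measure.addHaarMeasure_self
instance : IsProbabilityMeasure (volume : Measure 𝕋) := by
  constructor; rw [AddCircle.measure_univ]; simp

/-- projection to the first N coordinates -/
def proj (N : ℕ) : Tω → (Fin N → 𝕋) := fun g i => g i

lemma measurable_proj (N : ℕ) : Measurable (proj N) :=
  measurable_pi_lambda _ (fun i => measurable_pi_apply _)

lemma proj_addHom (N : ℕ) (t g : Tω) : proj N (t + g) = proj N t + proj N g := rfl

lemma map_proj_invariant (N : ℕ) : Measure.IsAddLeftInvariant (haarTω.map (proj N)) := by
  constructor
  intro v
  have hπ := measurable_proj N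
  set g₀ : Tω := fun j => if h : j < N then v ⟨j, h⟩ else 0 with hg₀
  have hcomm : (fun x => v + x) ∘ proj N = proj N ∘ (fun x => g₀ + x) := by
    funext g
    funext i
    simp only [Function.comp_apply, proj, Pi.add_apply, hg₀, i.isLt, dif_pos]
  rw [Measure.map_map (by exact measurable_const_add v) hπ, hcomm,
    ← Measure.map_map hπ (by exact measurable_const_add g₀),
    MeasureTheory.map_add_left_eq_self haarTω g₀]


lemma map_proj_eq_pi (N : ℕ) :
    haarTω.map (proj N) = Measure.pi (fun _ : Fin N => (volume : Measure 𝕋)) := by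
  have h1 : IsProbabilityMeasure (haarTω.map (proj N)) :=
    Measure.isProbabilityMeasure_map (measurable_proj N).aemeasurable
  have h2 := map_proj_invariant N
  have e1 := Measure.addHaarMeasure_unique (haarTω.map (proj N))
    (⊤ : TopologicalSpace.PositiveCompacts (Fin N → 𝕋))
  have e2 := Measure.addHaarMeasure_unique
    (Measure.pi (fun _ : Fin N => (volume : Measure 𝕋)))
    (⊤ : TopologicalSpace.PositiveCompacts (Fin N → 𝕋))
  rw [TopologicalSpace.PositiveCompacts.coe_top] at e1 e2
  rw [e1, e2, measure_univ, measure_univ]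

lemma haar_box (N : ℕ) (F : ℕ → Set 𝕋) (hF : ∀ i, MeasurableSet (F i))
    (hU : ∀ i, N ≤ i → F i = Set.univ) :
    haarTω (Set.pi Set.univ F) = ∏ i ∈ Finset.range N, volume (F i) := by
  have hpre : Set.pi Set.univ F = proj N ⁻¹' (Set.pi Set.univ fun i : Fin N => F i) := by
    ext g
    simp only [Set.mem_pi, Set.mem_univ, forall_true_left, Set.mem_preimage]
    constructor
    · intro h i; exact h i
    · intro h i
      by_cases hi : i < N
      · exact h ⟨i, hi⟩
      · rw [hU i (le_of_not_gt hi)]; trivial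
  rw [hpre, ← Measure.map_apply (measurable_proj N)
    (MeasurableSet.univ_pi fun i => hF i),
    map_proj_eq_pi, Measure.pi_pi, ← Fin.prod_univ_eq_prod_range]


lemma isOpen_arcImg (a b : ℝ) : IsOpen ((fun x : ℝ => (x : 𝕋)) '' Ioo a b) :=
  QuotientAddGroup.isOpenMap_coe _ isOpen_Ioo

lemma volume_arcImg (a b : ℝ) (h1 : b - a ≤ 1) :
    (volume : Measure 𝕋) ((fun x : ℝ => (x : 𝕋)) '' Ioo a b) = ENNReal.ofReal (b - a) := by
  have hmeas : MeasurableSet ((fun x : ℝ => (x : 𝕋)) '' Ioo a b) :=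
    (isOpen_arcImg a b).measurableSet
  rw [AddCircle.add_projection_respects_measure (T := 1) a hmeas]
  have hset : QuotientAddGroup.mk ⁻¹' ((fun x : ℝ => (x : 𝕋)) '' Ioo a b) ∩ Ioc a (a + 1)
      = Ioo a b := by
    ext z
    constructor
    · rintro ⟨⟨y, hy, hxy⟩, hz⟩
      have hmem : y - z ∈ AddSubgroup.zmultiples (1 : ℝ) := by
        rw [← QuotientAddGroup.eq_iff_sub_mem]
        exact hxy
      obtain ⟨k, hk⟩ := AddSubgroup.mem_zmultiples_iff.mp hmem
      have hk' : (k : ℝ) = y - z := by simpa using hk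
      have hk1 : (k : ℝ) < 1 := by
        have := hy.2; have := hz.1; linarith
      have hk2 : (-1 : ℝ) < (k : ℝ) := by
        have := hy.1; have := hz.2; linarith
      have hk0 : k = 0 := by
        have h1' : k < 1 := by exact_mod_cast hk1
        have h2' : -1 < k := by exact_mod_cast hk2
        omega
      have : y = z := by rw [hk0] at hk'; push_cast at hk'; linarith
      rwa [← this]
    · intro hz
      exact ⟨⟨z, hz, rfl⟩, ⟨hz.1, le_trans hz.2.le (by linarith)⟩⟩
  rw [hset, Real.volume_Ioo]

lemma volume_arc (l : ℝ) (h1 : l ≤ 1) : (volume : Measure 𝕋) (arc l) = ENNReal.ofReal l := by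
  have := volume_arcImg 0 l (by linarith)
  simpa [arc] using this

lemma translate_eq_preimage (t : Tω) (B : Set Tω) :
    (fun x => t + x) '' B = (fun x => -t + x) ⁻¹' B := by
  ext y
  constructor
  · rintro ⟨b, hb, rfl⟩; simpa using hb
  · intro hy; exact ⟨-t + y, hy, by show t + (-t + y) = y; rw [← add_assoc, add_neg_cancel, zero_add]⟩

lemma mem_translate (t : Tω) (B : Set Tω) (g : Tω) :
    g ∈ (fun x => t + x) '' B ↔ g - t ∈ B := by
  rw [translate_eq_preimage]
  simp only [Set.mem_preimage, sub_eq_neg_add]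

lemma haar_translate (t : Tω) (B : Set Tω) :
    haarTω ((fun x => t + x) '' B) = haarTω B := by
  rw [translate_eq_preimage, measure_preimage_add]


lemma sideLen_eq (m i : ℕ) (hm : 1 ≤ m) :
    sideLen (m * m + (m + 1)) i =
      if i = 0 then some (m + 1) else if i < m + 1 then some m else none := by
  have hsqrt : Nat.sqrt (m * m + (m + 1)) = m := Nat.sqrt_add_eq m (by omega)
  unfold sideLen
  simp only [hsqrt]
  have hr : m * m + (m + 1) - m * m = m + 1 := by omega
  rw [hr]
  have h1 : ¬ (m + 1 = 0) := by omega
  have h2 : ¬ (m + 1 ≤ m) := by omega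
  rw [if_neg h1, if_neg h2]
  have h3 : m + 1 - m = 1 := by omega
  rw [h3]
  by_cases hi : i = 0
  · subst hi; simp [hm]
  · rw [if_neg (by omega : ¬ i < 1), if_neg hi]

lemma Vcell_eq (m : ℕ) (hm : 1 ≤ m) :
    Vcell (m * m + (m + 1)) = Set.pi Set.univ (fun i =>
      if i = 0 then arc ((2:ℝ)⁻¹ ^ (m+1)) else if i < m + 1 then arc ((2:ℝ)⁻¹ ^ m)
      else Set.univ) := by
  unfold Vcell
  apply Set.pi_congr rfl
  intro i _
  rw [sideLen_eq m i hm]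
  by_cases hi : i = 0
  · simp [hi]
  · by_cases hi2 : i < m + 1 <;> simp [hi, hi2]


/-- The small cube `(0, 2^{-(m+1)})^{m+1} × ∏ 𝕋`. -/
def Wset (m : ℕ) : Set Tω :=
  Set.pi Set.univ (fun i => if i < m + 1 then arc ((2:ℝ)⁻¹ ^ (m+1)) else Set.univ)

/-- The enlarged set `(0,a) × (-a, 2a)^m × ∏ 𝕋` where `a = 2^{-(m+1)}`. -/
def Eset (m : ℕ) : Set Tω :=
  Set.pi Set.univ (fun i =>
    if i = 0 then arc ((2:ℝ)⁻¹ ^ (m+1))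
    else if i < m + 1 then
      (fun x : ℝ => (x : 𝕋)) '' Ioo (-((2:ℝ)⁻¹ ^ (m+1))) (2 * (2:ℝ)⁻¹ ^ (m+1))
    else Set.univ)

lemma measurableSet_arc (l : ℝ) : MeasurableSet (arc l) :=
  (isOpen_arcImg 0 l).measurableSet

lemma measurableSet_Wset (m : ℕ) : MeasurableSet (Wset m) := by
  apply MeasurableSet.univ_pi
  intro i
  by_cases hi : i < m + 1 <;> simp [Wset, hi, measurableSet_arc]

lemma measurableSet_Eset (m : ℕ) : MeasurableSet (Eset m) := by
  apply MeasurableSet.univ_pi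
  intro i
  by_cases hi : i = 0
  · simp [Eset, hi, measurableSet_arc]
  · by_cases hi2 : i < m + 1 <;>
      simp [Eset, hi, hi2, measurableSet_arc, (isOpen_arcImg _ _).measurableSet]

lemma ha_pos (m : ℕ) : (0:ℝ) < (2:ℝ)⁻¹ ^ (m+1) := by positivity

lemma ha_le (m : ℕ) (hm : 1 ≤ m) : 3 * (2:ℝ)⁻¹ ^ (m+1) ≤ 1 := by
  have h : (2:ℝ)⁻¹ ^ (m+1) ≤ (2:ℝ)⁻¹ ^ 2 := by
    apply pow_le_pow_of_le_one (by norm_num) (by norm_num)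
    omega
  norm_num at h ⊢
  linarith

lemma haar_Wset (m : ℕ) (hm : 1 ≤ m) :
    haarTω (Wset m) = ENNReal.ofReal ((2:ℝ)⁻¹ ^ (m+1)) ^ (m+1) := by
  rw [Wset, haar_box (m+1) _ (fun i => by
      by_cases hi : i < m + 1 <;> simp [hi, measurableSet_arc])
    (fun i hi => by simp [Nat.not_lt.mpr hi])]
  have h1 : ∀ i ∈ Finset.range (m+1),
      (volume : Measure 𝕋) (if i < m + 1 then arc ((2:ℝ)⁻¹ ^ (m+1)) else Set.univ)
        = ENNReal.ofReal ((2:ℝ)⁻¹ ^ (m+1)) := by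
    intro i hi
    rw [if_pos (Finset.mem_range.mp hi), volume_arc _ (by have := ha_le m hm; linarith)]
  rw [Finset.prod_congr rfl h1, Finset.prod_const, Finset.card_range]

lemma haar_Vcell (m : ℕ) (hm : 1 ≤ m) :
    haarTω (Vcell (m * m + (m + 1)))
      = ENNReal.ofReal ((2:ℝ)⁻¹ ^ m) ^ m * ENNReal.ofReal ((2:ℝ)⁻¹ ^ (m+1)) := by
  rw [Vcell_eq m hm, haar_box (m+1) _ (fun i => by
      by_cases hi : i = 0
      · simp [hi, measurableSet_arc]
      · by_cases hi2 : i < m + 1 <;> simp [hi, hi2, measurableSet_arc])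
    (fun i hi => by
      rw [if_neg (by omega), if_neg (by omega)]),
    Finset.prod_range_succ']
  have h1 : ∀ i ∈ Finset.range m,
      (volume : Measure 𝕋) (if i + 1 = 0 then arc ((2:ℝ)⁻¹ ^ (m+1))
        else if i + 1 < m + 1 then arc ((2:ℝ)⁻¹ ^ m) else Set.univ)
        = ENNReal.ofReal ((2:ℝ)⁻¹ ^ m) := by
    intro i hi
    rw [if_neg (by omega), if_pos (by have := Finset.mem_range.mp hi; omega),
      volume_arc]
    have h : (2:ℝ)⁻¹ ^ m ≤ (2:ℝ)⁻¹ ^ 1 := by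
      apply pow_le_pow_of_le_one (by norm_num) (by norm_num) hm
    norm_num at h; linarith
  rw [Finset.prod_congr rfl h1, Finset.prod_const, Finset.card_range, if_pos rfl,
    volume_arc _ (by have := ha_le m hm; linarith)]

lemma haar_Eset (m : ℕ) (hm : 1 ≤ m) :
    haarTω (Eset m)
      = ENNReal.ofReal (3 * (2:ℝ)⁻¹ ^ (m+1)) ^ m * ENNReal.ofReal ((2:ℝ)⁻¹ ^ (m+1)) := by
  rw [Eset, haar_box (m+1) _ (fun i => by
      by_cases hi : i = 0
      · simp [hi, measurableSet_arc]
      · by_cases hi2 : i < m + 1 <;>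
          simp [hi, hi2, measurableSet_arc, (isOpen_arcImg _ _).measurableSet])
    (fun i hi => by
      rw [if_neg (by omega), if_neg (by omega)]),
    Finset.prod_range_succ']
  have h1 : ∀ i ∈ Finset.range m,
      (volume : Measure 𝕋) (if i + 1 = 0 then arc ((2:ℝ)⁻¹ ^ (m+1))
        else if i + 1 < m + 1 then
          (fun x : ℝ => (x : 𝕋)) '' Ioo (-((2:ℝ)⁻¹ ^ (m+1))) (2 * (2:ℝ)⁻¹ ^ (m+1))
        else Set.univ)
        = ENNReal.ofReal (3 * (2:ℝ)⁻¹ ^ (m+1)) := by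
    intro i hi
    rw [if_neg (by omega), if_pos (by have := Finset.mem_range.mp hi; omega),
      volume_arcImg _ _ (by have := ha_le m hm; have := ha_pos m; linarith)]
    congr 1
    ring
  rw [Finset.prod_congr rfl h1, Finset.prod_const, Finset.card_range, if_pos rfl,
    volume_arc _ (by have := ha_le m hm; linarith)]


lemma measurableSet_Vcell (m : ℕ) (hm : 1 ≤ m) :
    MeasurableSet (Vcell (m * m + (m + 1))) := by
  rw [Vcell_eq m hm]
  apply MeasurableSet.univ_pi
  intro i
  by_cases hi : i = 0
  · simp [hi, measurableSet_arc]
  · by_cases hi2 : i < m + 1 <;> simp [hi, hi2, measurableSet_arc]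

lemma two_inv_pow_succ (m : ℕ) : (2:ℝ)⁻¹ ^ m = 2 * (2:ℝ)⁻¹ ^ (m+1) := by
  rw [pow_succ]; ring

end RdFAux


end RdFAuxSec

/-- The maximal operator `M_R` associated with the Rubio de Francia basis
is not of weak type (1,1): for every `C > 0` there exist `f ∈ L¹(𝕋^ω)` and `λ > 0` with
`λ·m({M_R f > λ}) > C·‖f‖₁`. -/
theorem rubioDeFrancia_maximal_not_weakType11 :
    ∀ C : ℝ, 0 < C → ∃ f : Tω → ℝ, Integrable f haarTω ∧ ∃ lam : ℝ, 0 < lam ∧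
      C * ∫ x, |f x| ∂haarTω <
        lam * (haarTω {g | maximalGT (basisOf RdF) f g lam}).toReal := by
  intro C hC
  obtain ⟨m₀, hm₀⟩ := pow_unbounded_of_one_lt (2 * C) (by norm_num : (1:ℝ) < 3/2)
  set m := m₀ + 1 with hmdef
  have hm : 1 ≤ m := Nat.le_add_left 1 m₀
  have hCm : 2 * C < (3/2 : ℝ) ^ m :=
    lt_of_lt_of_le hm₀ (pow_le_pow_right₀ (by norm_num) (Nat.le_succ m₀))
  set a : ℝ := (2:ℝ)⁻¹ ^ (m+1) with hadef
  have ha : 0 < a := RdFAux.ha_pos m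
  have h2a : (2:ℝ)⁻¹ ^ m = 2 * a := RdFAux.two_inv_pow_succ m
  have h2apos : (0:ℝ) < (2:ℝ)⁻¹ ^ m := by positivity
  set f : Tω → ℝ := (RdFAux.Wset m).indicator (fun _ => (1:ℝ)) with hfdef
  refine ⟨f, (integrable_const 1).indicator (RdFAux.measurableSet_Wset m), a, ha, ?_⟩
  -- the integral of |f|
  have habs : ∀ x : Tω, |f x| = f x := by
    intro x
    rw [hfdef]
    by_cases hx : x ∈ RdFAux.Wset m <;> simp [Set.indicator_apply, hx]
  have hint : ∫ x, |f x| ∂haarTω = a ^ (m+1) := by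
    simp only [habs]
    rw [hfdef, integral_indicator_const (1:ℝ) (RdFAux.measurableSet_Wset m), measureReal_def,
      RdFAux.haar_Wset m hm, ← ENNReal.ofReal_pow ha.le,
      ENNReal.toReal_ofReal (by positivity), smul_eq_mul, mul_one]
  -- the sub-level inclusion
  have hsub : RdFAux.Eset m ⊆ {g | maximalGT (basisOf RdF) f g a} := by
    intro g hg
    have hgf : ∀ i, g i ∈ (if i = 0 then arc ((2:ℝ)⁻¹ ^ (m+1))
        else if i < m + 1 then
          (fun x : ℝ => (x : 𝕋)) '' Ioo (-((2:ℝ)⁻¹ ^ (m+1))) (2 * (2:ℝ)⁻¹ ^ (m+1))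
        else Set.univ) := fun i => hg i (Set.mem_univ i)
    have hx : ∀ i : ℕ, ∃ x : ℝ, (1 ≤ i → i < m + 1 → x ∈ Ioo (-a) (2*a) ∧ (x:𝕋) = g i) := by
      intro i
      by_cases h1 : 1 ≤ i ∧ i < m + 1
      · have := hgf i
        rw [if_neg (by omega), if_pos h1.2] at this
        obtain ⟨x, hx1, hx2⟩ := this
        exact ⟨x, fun _ _ => ⟨hx1, hx2⟩⟩
      · exact ⟨0, fun h2 h3 => absurd ⟨h2, h3⟩ h1⟩
    choose x hx using hx
    set τ : ℕ → ℝ := fun j => if x j < a then -a else 0 with hτdef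
    set t : Tω := fun j => if 1 ≤ j ∧ j < m + 1 then ((τ j : ℝ) : 𝕋) else 0 with htdef
    set B : Set Tω := (fun y => t + y) '' Vcell (m * m + (m + 1)) with hBdef
    have hBR : B ∈ RdF := ⟨m * m + (m + 1), by omega, t, rfl⟩
    have ht0 : t 0 = 0 := by rw [htdef]; exact if_neg (by omega)
    have hti : ∀ i, 1 ≤ i → i < m + 1 → t i = ((τ i : ℝ) : 𝕋) := by
      intro i h1 h2; rw [htdef]; exact if_pos ⟨h1, h2⟩
    -- g belongs to B
    have hgB : g ∈ B := by
      rw [hBdef, RdFAux.mem_translate, RdFAux.Vcell_eq m hm]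
      intro i _
      simp only [Pi.sub_apply]
      by_cases hi0 : i = 0
      · subst hi0
        rw [if_pos rfl, ht0, sub_zero]
        have := hgf 0; rwa [if_pos rfl] at this
      · by_cases hi : i < m + 1
        · rw [if_neg hi0, if_pos hi]
          obtain ⟨hxi, hxieq⟩ := hx i (by omega) hi
          rw [hti i (by omega) hi, ← hxieq, ← QuotientAddGroup.mk_sub]
          refine ⟨x i - τ i, ?_, rfl⟩
          rw [h2a, show τ i = if x i < a then -a else 0 from rfl]
          by_cases hlt : x i < a
          · rw [if_pos hlt]
            exact ⟨by have := hxi.1; linarith, by have := hxi.2; linarith⟩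
          · rw [if_neg hlt]
            push_neg at hlt
            exact ⟨by linarith, by have := hxi.2; linarith⟩
        · rw [if_neg hi0, if_neg hi]; trivial
    -- W is contained in B
    have hWB : RdFAux.Wset m ⊆ B := by
      intro w hw
      have hwf : ∀ i, w i ∈ (if i < m + 1 then arc ((2:ℝ)⁻¹ ^ (m+1)) else Set.univ) :=
        fun i => hw i (Set.mem_univ i)
      rw [hBdef, RdFAux.mem_translate, RdFAux.Vcell_eq m hm]
      intro i _
      simp only [Pi.sub_apply]
      by_cases hi0 : i = 0
      · subst hi0
        rw [if_pos rfl, ht0, sub_zero]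
        have := hwf 0; rwa [if_pos (by omega)] at this
      · by_cases hi : i < m + 1
        · rw [if_neg hi0, if_pos hi]
          have := hwf i
          rw [if_pos hi] at this
          obtain ⟨u, hu, hueq⟩ := this
          rw [hti i (by omega) hi, ← hueq, ← QuotientAddGroup.mk_sub]
          refine ⟨u - τ i, ?_, rfl⟩
          rw [h2a, show τ i = if x i < a then -a else 0 from rfl]
          by_cases hlt : x i < a
          · rw [if_pos hlt]
            exact ⟨by have := hu.1; linarith, by have := hu.2; linarith⟩
          · rw [if_neg hlt]
            exact ⟨by have := hu.1; linarith, by have := hu.2; linarith⟩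
        · rw [if_neg hi0, if_neg hi]; trivial
    -- the average of f on B
    have hμB : haarTω B
        = ENNReal.ofReal ((2:ℝ)⁻¹ ^ m) ^ m * ENNReal.ofReal ((2:ℝ)⁻¹ ^ (m+1)) := by
      rw [hBdef, RdFAux.haar_translate, RdFAux.haar_Vcell m hm]
    have hμBtoReal : (haarTω B).toReal = ((2:ℝ)⁻¹ ^ m) ^ m * a := by
      rw [hμB, ENNReal.toReal_mul, ENNReal.toReal_pow,
        ENNReal.toReal_ofReal h2apos.le, ENNReal.toReal_ofReal ha.le]
    have havg : avg f B = (2:ℝ)⁻¹ ^ m := by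
      rw [avg, setAverage_eq, hfdef,
        integral_indicator_const (1:ℝ) (RdFAux.measurableSet_Wset m),
        measureReal_def, measureReal_def, Measure.restrict_apply (RdFAux.measurableSet_Wset m),
        Set.inter_eq_left.mpr hWB, RdFAux.haar_Wset m hm, smul_eq_mul, smul_eq_mul, mul_one,
        ← ENNReal.ofReal_pow ha.le, ENNReal.toReal_ofReal (by positivity), hμBtoReal]
      have hexp : ((2:ℝ)⁻¹ ^ m) ^ m * a = (2:ℝ)⁻¹ ^ (m * m + (m + 1)) := by
        rw [hadef, ← pow_mul, ← pow_add]
      have hexp2 : a ^ (m + 1) = (2:ℝ)⁻¹ ^ ((m * m + (m + 1)) + m) := by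
        rw [hadef, ← pow_mul]
        congr 1
        ring
      rw [hexp, hexp2, pow_add (2⁻¹:ℝ) (m * m + (m + 1)) m, inv_mul_cancel_left₀ (by positivity)]
    refine ⟨B, ⟨hBR, subset_closure hgB⟩, ?_⟩
    rw [havg, abs_of_pos h2apos, hadef, pow_succ]
    nlinarith [h2apos]
  -- conclusion
  have hμE : (haarTω (RdFAux.Eset m)).toReal = (3 * a) ^ m * a := by
    rw [RdFAux.haar_Eset m hm, ENNReal.toReal_mul, ENNReal.toReal_pow,
      ENNReal.toReal_ofReal (by positivity), ENNReal.toReal_ofReal ha.le]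
  have hmono : (haarTω (RdFAux.Eset m)).toReal
      ≤ (haarTω {g | maximalGT (basisOf RdF) f g a}).toReal :=
    ENNReal.toReal_mono (measure_ne_top _ _) (measure_mono hsub)
  rw [hμE] at hmono
  have hC3 : C < 3 ^ m * a := by
    have e : (3/2 : ℝ) ^ m = 3 ^ m * (2:ℝ)⁻¹ ^ m := by
      rw [div_eq_mul_inv, mul_pow]
    rw [e, h2a] at hCm
    have h3pos : (0:ℝ) < 3 ^ m := by positivity
    nlinarith
  rw [hint]
  have step1 : C * a ^ (m+1) < (3 ^ m * a) * a ^ (m+1) :=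
    mul_lt_mul_of_pos_right hC3 (by positivity)
  have step2 : (3 ^ m * a) * a ^ (m+1) = a * ((3 * a) ^ m * a) := by
    rw [mul_pow, pow_succ]
    ring
  have step3 : a * ((3 * a) ^ m * a)
      ≤ a * (haarTω {g | maximalGT (basisOf RdF) f g a}).toReal :=
    mul_le_mul_of_nonneg_left hmono ha.le
  linarith
end

section
/- The Rubio de Francia basis R does not differentiate L¹(T^ω): there exist f ∈ L¹(T^ω) and a set of strictly positive Haar measure of points g ∈ T^ω such that for each such g there is a sequence (S_n)_{n≥1} ⊆ R(g) with diam(S_n) → 0 for which f_{S_n} does not converge to f(g). -/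
open MeasureTheory Filter Topology Set
open scoped ENNReal

noncomputable section Aux
open MeasureTheory Filter Topology Set
open scoped ENNReal

abbrev tmk : ℝ → 𝕋 := fun x => (x : 𝕋)

lemma tmk_continuous : Continuous tmk := continuous_quotient_mk'

lemma tmk_isOpenMap : IsOpenMap tmk := QuotientAddGroup.isOpenMap_coe

/-- arc from a to b -/
def arcIoo (a b : ℝ) : Set 𝕋 := tmk '' Set.Ioo a b

lemma isOpen_arcIoo (a b : ℝ) : IsOpen (arcIoo a b) := tmk_isOpenMap _ isOpen_Ioo

lemma measurableSet_arcIoo (a b : ℝ) : MeasurableSet (arcIoo a b) :=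
  (isOpen_arcIoo a b).measurableSet

lemma T_vol_univ : (volume : Measure 𝕋) Set.univ = 1 := by
  simpa using AddCircle.measure_univ (T := (1:ℝ))

instance : IsProbabilityMeasure (volume : Measure 𝕋) := ⟨T_vol_univ⟩

lemma volume_arcIoo_zero {l : ℝ} (h0 : 0 ≤ l) (h1 : l ≤ 1) :
    (volume : Measure 𝕋) (arcIoo 0 l) = ENNReal.ofReal l := by
  have hmp : MeasurePreserving (β := 𝕋) ((↑) : ℝ → 𝕋)
      (volume.restrict (Set.Ioc 0 (0 + 1))) volume := AddCircle.measurePreserving_mk 1 0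
  have hpre : tmk ⁻¹' (arcIoo 0 l) ∩ Set.Ioc 0 (0+1) = Set.Ioo 0 l := by
    ext x
    simp only [Set.mem_inter_iff, Set.mem_preimage, Set.mem_Ioc, zero_add, arcIoo,
      Set.mem_image, Set.mem_Ioo]
    constructor
    · rintro ⟨⟨y, ⟨hy0, hyl⟩, hxy⟩, hx0, hx1⟩
      have hyI : y ∈ Set.Ico (0:ℝ) (0 + 1) := ⟨le_of_lt hy0, by linarith⟩
      rcases eq_or_lt_of_le hx1 with h1 | h1
      · exfalso
        have : ((x : ℝ) : 𝕋) = ((0 : ℝ) : 𝕋) := by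
          rw [h1]; norm_cast
          simp [AddCircle.coe_period]
        have h0y : (0:ℝ) ∈ Set.Ico (0:ℝ) (0+1) := by constructor <;> norm_num
        have := (AddCircle.coe_eq_coe_iff_of_mem_Ico (hp := ⟨zero_lt_one⟩) h0y hyI).mp
          (this.symm.trans hxy.symm)
        · linarith
      · have hxI : x ∈ Set.Ico (0:ℝ) (0 + 1) := ⟨le_of_lt hx0, by linarith⟩
        have := (AddCircle.coe_eq_coe_iff_of_mem_Ico (hp := ⟨zero_lt_one⟩) hxI hyI).mp hxy.symm
        exact this ▸ ⟨hy0, hyl⟩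
    · rintro ⟨hx0, hxl⟩
      exact ⟨⟨x, ⟨hx0, hxl⟩, rfl⟩, hx0, by linarith⟩
  calc (volume : Measure 𝕋) (arcIoo 0 l)
      = (volume.restrict (Set.Ioc 0 (0+1))) (tmk ⁻¹' (arcIoo 0 l)) :=
        (hmp.measure_preimage (measurableSet_arcIoo 0 l).nullMeasurableSet).symm
    _ = volume (tmk ⁻¹' (arcIoo 0 l) ∩ Set.Ioc 0 (0+1)) := by
        rw [Measure.restrict_apply]
        exact tmk_continuous.measurable (measurableSet_arcIoo 0 l)
    _ = ENNReal.ofReal l := by rw [hpre]; simp [Real.volume_Ioo]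

lemma arcIoo_translate (a b c : ℝ) :
    (fun z => tmk c + z) '' arcIoo a b = arcIoo (c + a) (c + b) := by
  simp only [arcIoo]
  rw [← Set.image_const_add_Ioo, Set.image_image, Set.image_image]
  apply Set.image_congr
  intro x _
  push_cast
  rfl

lemma measure_T_add (c : 𝕋) (S : Set 𝕋) (hS : MeasurableSet S) :
    (volume : Measure 𝕋) ((fun z => c + z) '' S) = volume S := by
  have himg : (fun z : 𝕋 => c + z) '' S = (fun z : 𝕋 => -c + z) ⁻¹' S := by
    ext z
    simp only [Set.mem_image, Set.mem_preimage]
    constructor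
    · rintro ⟨y, hy, rfl⟩; simpa [neg_add_cancel_left] using hy
    · intro hz; exact ⟨-c + z, hz, by abel⟩
  rw [himg, measure_preimage_add]

lemma volume_arcIoo (a : ℝ) {l : ℝ} (h0 : 0 ≤ l) (h1 : l ≤ 1) :
    (volume : Measure 𝕋) (arcIoo a (a + l)) = ENNReal.ofReal l := by
  have h : arcIoo (a + 0) (a + l) = (fun z => tmk a + z) '' arcIoo 0 l :=
    (arcIoo_translate 0 l a).symm
  rw [add_zero] at h
  rw [h, measure_T_add _ _ (measurableSet_arcIoo 0 l)]
  exact volume_arcIoo_zero h0 h1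

end Aux
noncomputable section Aux2
open MeasureTheory Filter Topology Set
open scoped ENNReal

instance : haarTω.IsAddLeftInvariant := by
  unfold haarTω; infer_instance

instance : IsProbabilityMeasure haarTω := by
  constructor
  have : (Set.univ : Set Tω) = ((⊤ : TopologicalSpace.PositiveCompacts Tω) : Set Tω) := by
    simp
  rw [haarTω, this]
  exact Measure.addHaarMeasure_self

/-- projection onto the first d coordinates -/
def projT (d : ℕ) : Tω → (Fin d → 𝕋) := fun g j => g j

lemma measurable_projT (d : ℕ) : Measurable (projT d) := by
  apply measurable_pi_lambda
  exact fun j => measurable_pi_apply _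

lemma map_projT_eq_volume (d : ℕ) :
    Measure.map (projT d) haarTω = (volume : Measure (Fin d → 𝕋)) := by
  have hinv : (Measure.map (projT d) haarTω).IsAddLeftInvariant := by
    constructor
    intro h
    set g₀ : Tω := fun i => if hi : (i : ℕ) < d then h ⟨i, hi⟩ else 0 with hg₀
    have hcomp : (fun x => h + x) ∘ projT d = projT d ∘ (fun x => g₀ + x) := by
      funext g j
      simp [projT, hg₀, j.isLt]
    rw [Measure.map_map (by measurability) (measurable_projT d), hcomp,
      ← Measure.map_map (measurable_projT d) (by measurability),
      map_add_left_eq_self haarTω g₀]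
  have hprob : IsProbabilityMeasure (Measure.map (projT d) haarTω) :=
    Measure.isProbabilityMeasure_map (measurable_projT d).aemeasurable
  have h1 := Measure.addHaarMeasure_unique (G := Fin d → 𝕋)
    (Measure.map (projT d) haarTω) ⊤
  have h2 := Measure.addHaarMeasure_unique (G := Fin d → 𝕋)
    (volume : Measure (Fin d → 𝕋)) ⊤
  have hc : ((⊤ : TopologicalSpace.PositiveCompacts (Fin d → 𝕋)) : Set (Fin d → 𝕋)) =
      Set.univ := by simp
  rw [h1, h2, hc]
  rw [measure_univ, measure_univ]

lemma haar_cylinder (d : ℕ) (A : ℕ → Set 𝕋) (hA : ∀ i, MeasurableSet (A i)) :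
    haarTω {g : Tω | ∀ i, i < d → g i ∈ A i} = ∏ i ∈ Finset.range d, volume (A i) := by
  have hset : {g : Tω | ∀ i, i < d → g i ∈ A i}
      = projT d ⁻¹' (Set.pi Set.univ (fun j : Fin d => A (j : ℕ))) := by
    ext g
    simp only [Set.mem_setOf_eq, Set.mem_preimage, Set.mem_pi, Set.mem_univ, true_implies]
    exact ⟨fun H j => H j j.isLt, fun H i hi => H ⟨i, hi⟩⟩
  have hms : MeasurableSet (Set.pi Set.univ (fun j : Fin d => A (j : ℕ))) :=
    MeasurableSet.univ_pi (fun j => hA _)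
  rw [hset, ← Measure.map_apply (measurable_projT d) hms, map_projT_eq_volume d,
    MeasureTheory.volume_pi, Measure.pi_pi]
  exact (Finset.prod_range (fun i => volume (A i))).symm

end Aux2
noncomputable section Aux3
open MeasureTheory Filter Topology Set
open scoped ENNReal

def aa (n : ℕ) : ℕ := 2^(n+3)
def bb (n : ℕ) : ℕ := 2^(n+3) - 2
def tt (n : ℕ) : ℕ := 2^(bb n)
def dd (n : ℕ) : ℕ := 2^(n + aa n)
def ee (n : ℕ) : ℕ := 2^(n + aa n) - aa n
def QQ (n : ℕ) : ℕ := 2^(ee n) * (2^(aa n) - 1)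

def pp (n : ℕ) : ℝ := (2:ℝ)⁻¹ ^ (aa n)
def alp (n : ℕ) : ℝ := (2:ℝ)⁻¹ ^ (dd n)
def bet (n : ℕ) : ℝ := ((QQ n : ℝ))⁻¹

lemma bb_add_two (n : ℕ) : bb n + 2 = aa n := by
  have : 2 ≤ 2^(n+3) := by
    calc 2 = 2^1 := rfl
    _ ≤ 2^(n+3) := Nat.pow_le_pow_right (by norm_num) (by omega)
  simp [bb, aa]; omega

lemma aa_le_dd_exp (n : ℕ) : aa n ≤ n + aa n := by omega

lemma ee_add_aa (n : ℕ) : ee n + aa n = dd n := by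
  have h : aa n ≤ 2^(n + aa n) := le_of_lt (lt_of_le_of_lt (aa_le_dd_exp n) (Nat.lt_two_pow_self))
  simp [ee, dd]; omega

lemma dd_pos (n : ℕ) : 0 < dd n := Nat.pow_pos (by norm_num)

lemma dd_ge (n : ℕ) : n + 4 ≤ dd n := by
  have h1 : n + aa n < 2^(n + aa n) := Nat.lt_two_pow_self
  have h2 : 8 ≤ aa n := by
    calc (8:ℕ) = 2^3 := rfl
    _ ≤ 2^(n+3) := Nat.pow_le_pow_right (by norm_num) (by omega)
  simp only [dd]; omega

lemma tt_le_dd (n : ℕ) : tt n ≤ dd n := by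
  apply Nat.pow_le_pow_right (by norm_num)
  have := bb_add_two n
  have := Nat.lt_two_pow_self (n := n + aa n)
  omega

lemma aa_mul_tt (n : ℕ) : aa n * tt n = 2 * dd n := by
  have h1 : aa n * tt n = 2^(n+3) * 2^(bb n) := rfl
  rw [h1, ← pow_add]
  have h2 : n + 3 + bb n = 1 + (n + aa n) := by
    have := bb_add_two n; omega
  rw [h2, pow_add, pow_one]; rfl

lemma QQ_pos (n : ℕ) : 0 < QQ n := by
  apply Nat.mul_pos (Nat.pow_pos (by norm_num))
  have h : aa n = (n + 2) + 1 + (2^(n+3) - (n+3)) := by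
    have := Nat.lt_two_pow_self (n := n+3); simp [aa]; omega
  have : 1 < 2^(aa n) := by
    rw [h]; exact lt_of_lt_of_le (Nat.one_lt_two_pow' (n+2))
      (Nat.pow_le_pow_right (by norm_num) (by omega))
  omega

lemma pp_pos (n : ℕ) : 0 < pp n := by simp only [pp]; positivity
lemma alp_pos (n : ℕ) : 0 < alp n := by simp only [alp]; positivity
lemma bet_pos (n : ℕ) : 0 < bet n := by
  have := QQ_pos n; simp only [bet]; positivity

lemma pp_le (n : ℕ) : pp n ≤ (2:ℝ)⁻¹^3 := by
  apply pow_le_pow_of_le_one (by norm_num) (by norm_num)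
  calc (3:ℕ) ≤ 2^3 := by norm_num
  _ ≤ 2^(n+3) := Nat.pow_le_pow_right (by norm_num) (by omega)

lemma pp_small (n : ℕ) : pp n ≤ 1/8 := le_trans (pp_le n) (by norm_num)

lemma QQ_mul_alp (n : ℕ) : (QQ n : ℝ) * alp n = 1 - pp n := by
  have h1 : ((QQ n : ℝ)) = 2^(ee n) * (2^(aa n) - 1) := by
    have : (1:ℕ) ≤ 2^(aa n) := Nat.one_le_two_pow
    simp only [QQ]; push_cast [this]; ring
  have h2 : alp n = (2:ℝ)⁻¹^(ee n) * (2:ℝ)⁻¹^(aa n) := by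
    rw [alp, ← pow_add, ee_add_aa]
  rw [h1, h2, pp]
  have h3 : ((2:ℝ)^(ee n)) * ((2:ℝ)⁻¹^(ee n)) = 1 := by
    rw [← mul_pow]; norm_num
  have h4 : ((2:ℝ)^(aa n)) * ((2:ℝ)⁻¹^(aa n)) = 1 := by
    rw [← mul_pow]; norm_num
  linear_combination ((2:ℝ)^(aa n)*(2:ℝ)⁻¹^(aa n) - (2:ℝ)⁻¹^(aa n)) * h3 + h4

lemma QQ_mul_bet (n : ℕ) : (QQ n : ℝ) * bet n = 1 := by
  have := QQ_pos n
  rw [bet, mul_inv_cancel₀]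
  positivity

lemma alp_le_bet (n : ℕ) : alp n ≤ bet n := by
  have h1 := QQ_mul_alp n
  have h2 := QQ_mul_bet n
  have h3 : (0:ℝ) < QQ n := by exact_mod_cast QQ_pos n
  have h4 := pp_pos n
  nlinarith

lemma bet_sub_alp (n : ℕ) : (QQ n : ℝ) * (bet n - alp n) = pp n := by
  have h1 := QQ_mul_alp n
  have h2 := QQ_mul_bet n
  nlinarith

lemma bet_le_one (n : ℕ) : bet n ≤ 1 := by
  have h3 : (1:ℝ) ≤ QQ n := by exact_mod_cast QQ_pos n
  have := bet_pos n
  have h2 := QQ_mul_bet n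
  nlinarith

lemma alp_le_one (n : ℕ) : alp n ≤ 1 := le_trans (alp_le_bet n) (bet_le_one n)

lemma tt_mul_pp (n : ℕ) : (tt n : ℝ) * pp n = 1/4 := by
  have h1 : ((tt n : ℝ)) = 2^(bb n) := by simp [tt]
  rw [h1, pp, ← bb_add_two n, pow_add]
  have h3 : ((2:ℝ)^(bb n)) * ((2:ℝ)⁻¹^(bb n)) = 1 := by
    rw [← mul_pow]; norm_num
  linear_combination ((2:ℝ)⁻¹^2) * h3

lemma dd_mul_pp (n : ℕ) : (dd n : ℝ) * pp n = 2^n := by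
  have h1 : ((dd n : ℝ)) = 2^(n + aa n) := by simp [dd]
  rw [h1, pow_add]
  have h3 : ((2:ℝ)^(aa n)) * (pp n) = 1 := by
    rw [pp, ← mul_pow]; norm_num
  linear_combination ((2:ℝ)^n) * h3

/-- per-coordinate core set -/
def coreT (n : ℕ) : Set 𝕋 :=
  ⋃ k ∈ Finset.range (QQ n), arcIoo (k * bet n) (k * bet n + alp n)

/-- per-coordinate excess set -/
def excT (n : ℕ) : Set 𝕋 :=
  ⋃ k ∈ Finset.range (QQ n), arcIoo (k * bet n + alp n) (k * bet n + bet n)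

lemma measurableSet_coreT (n : ℕ) : MeasurableSet (coreT n) :=
  MeasurableSet.biUnion (Finset.range (QQ n)).countable_toSet
    (fun _ _ => measurableSet_arcIoo _ _)

lemma measurableSet_excT (n : ℕ) : MeasurableSet (excT n) :=
  MeasurableSet.biUnion (Finset.range (QQ n)).countable_toSet
    (fun _ _ => measurableSet_arcIoo _ _)

lemma vol_coreT_le (n : ℕ) : volume (coreT n) ≤ ENNReal.ofReal (1 - pp n) := by
  calc volume (coreT n)
      ≤ ∑ k ∈ Finset.range (QQ n), volume (arcIoo (k * bet n) (k * bet n + alp n)) :=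
        measure_biUnion_finset_le _ _
    _ = ∑ k ∈ Finset.range (QQ n), ENNReal.ofReal (alp n) := by
        apply Finset.sum_congr rfl
        intro k _
        exact volume_arcIoo _ (le_of_lt (alp_pos n)) (alp_le_one n)
    _ = (QQ n : ℝ≥0∞) * ENNReal.ofReal (alp n) := by
        rw [Finset.sum_const, Finset.card_range, nsmul_eq_mul]
    _ = ENNReal.ofReal ((QQ n : ℝ) * alp n) := by
        rw [ENNReal.ofReal_mul (by positivity)]
        congr 1
        exact (ENNReal.ofReal_natCast _).symm
    _ = ENNReal.ofReal (1 - pp n) := by rw [QQ_mul_alp]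

lemma vol_excT_le (n : ℕ) : volume (excT n) ≤ ENNReal.ofReal (pp n) := by
  calc volume (excT n)
      ≤ ∑ k ∈ Finset.range (QQ n), volume (arcIoo (k * bet n + alp n) (k * bet n + bet n)) :=
        measure_biUnion_finset_le _ _
    _ = ∑ k ∈ Finset.range (QQ n), ENNReal.ofReal (bet n - alp n) := by
        apply Finset.sum_congr rfl
        intro k _
        have h : k * bet n + bet n = (k * bet n + alp n) + (bet n - alp n) := by ring
        rw [h]
        exact volume_arcIoo _ (by linarith [alp_le_bet n]) (by linarith [bet_le_one n, alp_pos n])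
    _ = (QQ n : ℝ≥0∞) * ENNReal.ofReal (bet n - alp n) := by
        rw [Finset.sum_const, Finset.card_range, nsmul_eq_mul]
    _ = ENNReal.ofReal ((QQ n : ℝ) * (bet n - alp n)) := by
        rw [ENNReal.ofReal_mul (by positivity)]
        congr 1
        exact (ENNReal.ofReal_natCast _).symm
    _ = ENNReal.ofReal (pp n) := by rw [bet_sub_alp]

end Aux3
noncomputable section Aux4
open MeasureTheory Filter Topology Set
open scoped ENNReal

lemma ofReal_half_pow (k : ℕ) : ENNReal.ofReal ((2:ℝ)⁻¹ ^ k) = (2:ℝ≥0∞)⁻¹ ^ k := by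
  rw [ENNReal.ofReal_pow (by norm_num)]
  congr 1
  rw [ENNReal.ofReal_inv_of_pos (by norm_num)]
  norm_num

lemma haar_cylinder_finset (s : Finset ℕ) (A : Set 𝕋) (hA : MeasurableSet A) :
    haarTω {g : Tω | ∀ i ∈ s, g i ∈ A} = (volume A) ^ (s.card) := by
  obtain ⟨d, hd⟩ := s.exists_nat_subset_range
  classical
  set A' : ℕ → Set 𝕋 := fun i => if i ∈ s then A else Set.univ with hA'
  have hset : {g : Tω | ∀ i ∈ s, g i ∈ A} = {g : Tω | ∀ i, i < d → g i ∈ A' i} := by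
    ext g
    simp only [Set.mem_setOf_eq, hA']
    constructor
    · intro H i _
      by_cases his : i ∈ s
      · simpa [his] using H i his
      · simp [his]
    · intro H i his
      have := H i (Finset.mem_range.mp (hd his))
      simpa [his] using this
  rw [hset, haar_cylinder d A' (fun i => by
    by_cases his : i ∈ s <;> simp [hA', his, hA, MeasurableSet.univ])]
  have : ∀ i ∈ Finset.range d, volume (A' i) = if i ∈ s then volume A else 1 := by
    intro i _
    by_cases his : i ∈ s <;> simp [hA', his, T_vol_univ]
  rw [Finset.prod_congr rfl this, Finset.prod_ite_mem, Finset.inter_eq_right.mpr hd,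
    Finset.prod_const]

/-- the support-block set at stage n -/
def OsetS (n : ℕ) : Set Tω := {g : Tω | ∀ i, i < dd n → g i ∈ coreT n}

/-- the bad set at stage n -/
def BadS (n : ℕ) : Set Tω :=
  ⋃ S ∈ Finset.powersetCard (tt n) (Finset.range (dd n)), {g : Tω | ∀ i ∈ S, g i ∈ excT n}

lemma measurableSet_OsetS (n : ℕ) : MeasurableSet (OsetS n) := by
  have : OsetS n = ⋂ i ∈ {i : ℕ | i < dd n}, (fun g : Tω => g i) ⁻¹' (coreT n) := by
    ext g; simp [OsetS]
  rw [this]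
  exact MeasurableSet.biInter (Set.to_countable _)
    (fun i _ => (measurable_pi_apply i) (measurableSet_coreT n))

lemma measurableSet_cylEx (s : Finset ℕ) (n : ℕ) :
    MeasurableSet {g : Tω | ∀ i ∈ s, g i ∈ excT n} := by
  have : {g : Tω | ∀ i ∈ s, g i ∈ excT n}
      = ⋂ i ∈ (s : Set ℕ), (fun g : Tω => g i) ⁻¹' (excT n) := by
    ext g; simp
  rw [this]
  exact MeasurableSet.biInter (Set.to_countable _)
    (fun i _ => (measurable_pi_apply i) (measurableSet_excT n))

lemma measurableSet_BadS (n : ℕ) : MeasurableSet (BadS n) :=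
  MeasurableSet.biUnion (Finset.countable_toSet _) (fun S _ => measurableSet_cylEx S n)

lemma haar_OsetS_le (n : ℕ) : haarTω (OsetS n) ≤ (2:ℝ≥0∞)⁻¹ ^ n := by
  have h1 : haarTω (OsetS n) = (volume (coreT n))^(dd n) := by
    rw [show OsetS n = {g : Tω | ∀ i, i < dd n → g i ∈ coreT n} from rfl,
      haar_cylinder (dd n) (fun _ => coreT n) (fun _ => measurableSet_coreT n),
      Finset.prod_const, Finset.card_range]
  rw [h1]
  calc (volume (coreT n))^(dd n) ≤ (ENNReal.ofReal (1 - pp n))^(dd n) := by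
        gcongr
        exact vol_coreT_le n
    _ = ENNReal.ofReal ((1 - pp n)^(dd n)) := by
        rw [ENNReal.ofReal_pow (by linarith [pp_small n])]
    _ ≤ ENNReal.ofReal ((2:ℝ)⁻¹ ^ n) := by
        apply ENNReal.ofReal_le_ofReal
        -- real inequality (1-p)^d ≤ (2⁻¹)^n
        have hp := pp_pos n
        have hps := pp_small n
        have hB : (2:ℝ)^n ≤ (1 + pp n)^(dd n) := by
          have h2 := one_add_mul_le_pow (a := pp n) (by linarith) (dd n)
          have h3 : (1:ℝ) + (dd n : ℝ) * pp n = 1 + 2^n := by rw [dd_mul_pp]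
          nlinarith [pow_pos (show (0:ℝ) < 2 by norm_num) n]
        have hA : ((1 - pp n)*(1 + pp n))^(dd n) ≤ 1 := by
          apply pow_le_one₀ (by nlinarith) (by nlinarith)
        rw [mul_pow] at hA
        have hnn : (0:ℝ) ≤ (1 - pp n)^(dd n) := pow_nonneg (by linarith) _
        have key : (1 - pp n)^(dd n) * (2:ℝ)^n ≤ 1 := by
          calc (1 - pp n)^(dd n) * (2:ℝ)^n ≤ (1 - pp n)^(dd n) * (1 + pp n)^(dd n) := by
                gcongr
            _ ≤ 1 := hA
        rw [inv_pow, ← one_div, le_div_iff₀ (by positivity)]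
        linarith
    _ = (2:ℝ≥0∞)⁻¹ ^ n := ofReal_half_pow n

lemma haar_BadS_le (n : ℕ) : haarTω (BadS n) ≤ (2:ℝ≥0∞)⁻¹ ^ (dd n) := by
  have hterm : ∀ S ∈ Finset.powersetCard (tt n) (Finset.range (dd n)),
      haarTω {g : Tω | ∀ i ∈ S, g i ∈ excT n} ≤ (ENNReal.ofReal (pp n))^(tt n) := by
    intro S hS
    obtain ⟨-, hcard⟩ := Finset.mem_powersetCard.mp hS
    rw [haar_cylinder_finset S (excT n) (measurableSet_excT n), hcard]
    gcongr
    exact vol_excT_le n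
  calc haarTω (BadS n)
      ≤ ∑ S ∈ Finset.powersetCard (tt n) (Finset.range (dd n)),
          haarTω {g : Tω | ∀ i ∈ S, g i ∈ excT n} := measure_biUnion_finset_le _ _
    _ ≤ ∑ S ∈ Finset.powersetCard (tt n) (Finset.range (dd n)),
          (ENNReal.ofReal (pp n))^(tt n) := Finset.sum_le_sum hterm
    _ = ((dd n).choose (tt n) : ℝ≥0∞) * (ENNReal.ofReal (pp n))^(tt n) := by
        rw [Finset.sum_const, Finset.card_powersetCard, Finset.card_range, nsmul_eq_mul]
    _ ≤ (2:ℝ≥0∞)^(dd n) * (2:ℝ≥0∞)⁻¹^(aa n * tt n) := by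
        apply mul_le_mul'
        · -- choose ≤ 2^d
          have h1 : (dd n).choose (tt n) ≤ 2^(dd n) := by
            have h2 : (dd n).choose (tt n) ≤ ∑ i ∈ Finset.range (dd n + 1), (dd n).choose i :=
              Finset.single_le_sum (f := fun i => (dd n).choose i) (fun _ _ => Nat.zero_le _)
                (Finset.mem_range.mpr (Nat.lt_succ_of_le (tt_le_dd n)))
            rw [Nat.sum_range_choose] at h2
            exact h2
          calc ((dd n).choose (tt n) : ℝ≥0∞) ≤ ((2^(dd n) : ℕ) : ℝ≥0∞) := by
                exact_mod_cast Nat.cast_le.mpr h1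
            _ = (2:ℝ≥0∞)^(dd n) := by push_cast; ring
        · rw [show ENNReal.ofReal (pp n) = (2:ℝ≥0∞)⁻¹^(aa n) from ofReal_half_pow (aa n),
            ← pow_mul]
    _ = (2:ℝ≥0∞)⁻¹ ^ (dd n) := by
        rw [aa_mul_tt, two_mul, pow_add]
        have hone : (2:ℝ≥0∞)^(dd n) * (2:ℝ≥0∞)⁻¹^(dd n) = 1 := by
          rw [← mul_pow, ENNReal.mul_inv_cancel (by norm_num) (by norm_num), one_pow]
        rw [← mul_assoc, hone, one_mul]

end Aux4
noncomputable section Aux5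
open MeasureTheory Filter Topology Set
open scoped ENNReal

/-- the ENNReal-valued sum of indicators -/
def FF : Tω → ℝ≥0∞ := fun g => ∑' k : ℕ, (OsetS (k+4)).indicator (fun _ => (1:ℝ≥0∞)) g

/-- the counterexample function -/
def ff : Tω → ℝ := fun g => (FF g).toReal

lemma measurable_FF : Measurable FF :=
  Measurable.ennreal_tsum (fun k => measurable_const.indicator (measurableSet_OsetS _))

lemma tsum_geom_tail : (∑' k : ℕ, (2:ℝ≥0∞)⁻¹ ^ (k+4)) = (2:ℝ≥0∞)⁻¹^3 := by
  have h : ∀ k : ℕ, (2:ℝ≥0∞)⁻¹ ^ (k+4) = (2:ℝ≥0∞)⁻¹^4 * (2:ℝ≥0∞)⁻¹^k := by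
    intro k; rw [← pow_add]; ring_nf
  rw [tsum_congr h, ENNReal.tsum_mul_left, ENNReal.tsum_geometric,
    ENNReal.one_sub_inv_two, inv_inv]
  have h2 : (2:ℝ≥0∞)⁻¹^4 * 2 = 2⁻¹^3 * (2⁻¹ * 2) := by
    rw [show (4:ℕ) = 3 + 1 from rfl, pow_succ, mul_assoc]
  rw [h2, ENNReal.inv_mul_cancel (by norm_num) (by norm_num), mul_one]

lemma lintegral_FF_le : ∫⁻ g, FF g ∂haarTω ≤ (2:ℝ≥0∞)⁻¹^3 := by
  simp only [FF]
  rw [lintegral_tsum (fun k => (measurable_const.indicator (measurableSet_OsetS _)).aemeasurable)]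
  calc ∑' k : ℕ, ∫⁻ g, (OsetS (k+4)).indicator (fun _ => (1:ℝ≥0∞)) g ∂haarTω
      = ∑' k : ℕ, haarTω (OsetS (k+4)) := by
        apply tsum_congr; intro k
        exact lintegral_indicator_one (measurableSet_OsetS _)
    _ ≤ ∑' k : ℕ, (2:ℝ≥0∞)⁻¹ ^ (k+4) := ENNReal.tsum_le_tsum (fun k => haar_OsetS_le _)
    _ = (2:ℝ≥0∞)⁻¹^3 := tsum_geom_tail

lemma lintegral_FF_ne_top : ∫⁻ g, FF g ∂haarTω ≠ ∞ :=
  ne_top_of_le_ne_top (by norm_num) lintegral_FF_le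

lemma FF_ae_lt_top : ∀ᵐ g ∂haarTω, FF g < ∞ := ae_lt_top measurable_FF lintegral_FF_ne_top

lemma ff_nonneg (g : Tω) : 0 ≤ ff g := ENNReal.toReal_nonneg

lemma measurable_ff : Measurable ff := measurable_FF.ennreal_toReal

lemma integrable_ff : Integrable ff haarTω := by
  constructor
  · exact measurable_ff.aestronglyMeasurable
  · show (∫⁻ g, (‖ff g‖₊ : ℝ≥0∞) ∂haarTω) < ∞
    calc ∫⁻ g, (‖ff g‖₊ : ℝ≥0∞) ∂haarTω ≤ ∫⁻ g, FF g ∂haarTω := by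
          apply lintegral_mono
          intro g
          simp only [ff]
          rw [show (‖(FF g).toReal‖₊ : ℝ≥0∞) = ‖(FF g).toReal‖ₑ from rfl, Real.enorm_eq_ofReal ENNReal.toReal_nonneg]
          exact ENNReal.ofReal_toReal_le
      _ < ∞ := lt_of_le_of_lt lintegral_FF_le (ENNReal.pow_lt_top (ENNReal.inv_lt_top.mpr (by norm_num)))

lemma ff_eq_zero {g : Tω} (h : ∀ k : ℕ, g ∉ OsetS (k+4)) : ff g = 0 := by
  have : FF g = 0 := by
    rw [FF]
    convert tsum_zero with k
    simp [Set.indicator_of_notMem (h k)]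
  rw [ff, this, ENNReal.toReal_zero]

lemma ff_ge_indicator_ae (k : ℕ) :
    ∀ᵐ g ∂haarTω, (OsetS (k+4)).indicator (fun _ => (1:ℝ)) g ≤ ff g := by
  filter_upwards [FF_ae_lt_top] with g hg
  by_cases hO : g ∈ OsetS (k+4)
  · rw [Set.indicator_of_mem hO]
    have h1 : (1:ℝ≥0∞) ≤ FF g := by
      have := ENNReal.le_tsum (f := fun k' : ℕ =>
        (OsetS (k'+4)).indicator (fun _ => (1:ℝ≥0∞)) g) k
      simpa [Set.indicator_of_mem hO, FF] using this
    have := ENNReal.toReal_mono hg.ne h1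
    simpa [ff] using this
  · rw [Set.indicator_of_notMem hO]
    exact ff_nonneg g

/-- the positive-measure exceptional set -/
def Eset : Set Tω := {g | (∀ k : ℕ, g ∉ BadS (k+4)) ∧ (∀ k : ℕ, g ∉ OsetS (k+4))}

lemma measurableSet_Eset : MeasurableSet Eset := by
  have : Eset = (⋂ k : ℕ, (BadS (k+4))ᶜ) ∩ (⋂ k : ℕ, (OsetS (k+4))ᶜ) := by
    ext g; simp [Eset]
  rw [this]
  exact ((MeasurableSet.iInter (fun k => (measurableSet_BadS _).compl)).inter
    (MeasurableSet.iInter (fun k => (measurableSet_OsetS _).compl)))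

lemma haar_Eset_compl_le : haarTω Esetᶜ ≤ (2:ℝ≥0∞)⁻¹^2 := by
  have hsub : Esetᶜ ⊆ (⋃ k : ℕ, BadS (k+4)) ∪ (⋃ k : ℕ, OsetS (k+4)) := by
    intro g hg
    simp only [Eset, Set.mem_compl_iff, Set.mem_setOf_eq, not_and_or, not_forall,
      not_not] at hg
    rcases hg with ⟨k, hk⟩ | ⟨k, hk⟩
    · exact Or.inl (Set.mem_iUnion.mpr ⟨k, hk⟩)
    · exact Or.inr (Set.mem_iUnion.mpr ⟨k, hk⟩)
  calc haarTω Esetᶜ ≤ haarTω ((⋃ k : ℕ, BadS (k+4)) ∪ (⋃ k : ℕ, OsetS (k+4))) :=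
        measure_mono hsub
    _ ≤ haarTω (⋃ k : ℕ, BadS (k+4)) + haarTω (⋃ k : ℕ, OsetS (k+4)) := measure_union_le _ _
    _ ≤ (∑' k : ℕ, haarTω (BadS (k+4))) + (∑' k : ℕ, haarTω (OsetS (k+4))) := by
        gcongr <;> exact measure_iUnion_le _
    _ ≤ (∑' k : ℕ, (2:ℝ≥0∞)⁻¹ ^ (k+4)) + (∑' k : ℕ, (2:ℝ≥0∞)⁻¹ ^ (k+4)) := by
        gcongr with k
        · calc haarTω (BadS (k+4)) ≤ (2:ℝ≥0∞)⁻¹ ^ (dd (k+4)) := haar_BadS_le _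
            _ ≤ (2:ℝ≥0∞)⁻¹ ^ (k+4) := by
              apply pow_le_pow_right_of_le_one' (by simp [ENNReal.inv_le_one])
              calc k + 4 ≤ (k+4) + 4 := by omega
              _ ≤ dd (k+4) := dd_ge (k+4)
        · exact haar_OsetS_le _
    _ = (2:ℝ≥0∞)⁻¹^3 + (2:ℝ≥0∞)⁻¹^3 := by rw [tsum_geom_tail]
    _ = (2:ℝ≥0∞)⁻¹^2 := by
        rw [← two_mul]
        have h2 : (2:ℝ≥0∞) * 2⁻¹^3 = (2 * 2⁻¹) * 2⁻¹^2 := by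
          rw [show (3:ℕ) = 1 + 2 from rfl, pow_add, pow_one, mul_assoc]
        rw [h2, ENNReal.mul_inv_cancel (by norm_num) (by norm_num), one_mul]

lemma haar_Eset_pos : 0 < haarTω Eset := by
  by_contra h
  push_neg at h
  have h0 : haarTω Eset = 0 := le_antisymm h zero_le
  have h1 : haarTω Eset + haarTω Esetᶜ = 1 := by
    rw [measure_add_measure_compl measurableSet_Eset]
    exact measure_univ
  rw [h0, zero_add] at h1
  have := haar_Eset_compl_le
  rw [h1] at this
  have h4 : ((2:ℝ≥0∞)⁻¹)^2 < 1 := by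
    rw [← ENNReal.inv_pow]
    rw [ENNReal.inv_lt_one]
    rw [show ((2:ℝ≥0∞)^2) = 4 by norm_num]
    norm_num
  exact absurd this (not_le.mpr h4)

end Aux5
noncomputable section Aux6
open MeasureTheory Filter Topology Set
open scoped ENNReal
open Classical

lemma rep_mem (y : 𝕋) : rep y ∈ Set.Ico (0:ℝ) 1 := by
  have := (AddCircle.equivIco (1:ℝ) 0 y).2
  simpa [rep] using this

lemma tmk_rep (y : 𝕋) : tmk (rep y) = y := by
  have h := (AddCircle.equivIco (1:ℝ) 0).symm_apply_apply y
  exact h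

/-- the fractional coordinates -/
def xg (g : Tω) (i : ℕ) : ℝ := rep (g i)

/-- the lattice cell index -/
def kk (n : ℕ) (g : Tω) (i : ℕ) : ℕ := ⌊xg g i * QQ n⌋₊

/-- the exceed predicate -/
def exceedP (n : ℕ) (g : Tω) (i : ℕ) : Prop := (kk n g i) * bet n + alp n < xg g i

/-- left endpoints of the chosen box -/
def cc (n : ℕ) (g : Tω) (i : ℕ) : ℝ :=
  if exceedP n g i then xg g i - alp n else (kk n g i) * bet n

/-- the translation vector -/
def ttau (n : ℕ) (g : Tω) : Tω := fun i => if i < dd n then tmk (cc n g i) else 0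

/-- the chosen box of the basis -/
def Bbox (n : ℕ) (g : Tω) : Set Tω := (fun y => ttau n g + y) '' Vcell ((dd n)^2)

lemma xg_mem (g : Tω) (i : ℕ) : xg g i ∈ Set.Ico (0:ℝ) 1 := rep_mem _

lemma kk_le (n : ℕ) (g : Tω) (i : ℕ) : (kk n g i : ℝ) * bet n ≤ xg g i := by
  have hq : (0:ℝ) < QQ n := by exact_mod_cast QQ_pos n
  have h1 : (kk n g i : ℝ) ≤ xg g i * QQ n :=
    Nat.floor_le (mul_nonneg (xg_mem g i).1 hq.le)
  have h2 := QQ_mul_bet n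
  have hb := bet_pos n
  calc (kk n g i : ℝ) * bet n ≤ (xg g i * QQ n) * bet n := by gcongr
    _ = xg g i * ((QQ n : ℝ) * bet n) := by ring
    _ = xg g i := by rw [h2, mul_one]

lemma lt_kk_succ (n : ℕ) (g : Tω) (i : ℕ) : xg g i < (kk n g i : ℝ) * bet n + bet n := by
  have hq : (0:ℝ) < QQ n := by exact_mod_cast QQ_pos n
  have h1 : xg g i * QQ n < (kk n g i : ℝ) + 1 := Nat.lt_floor_add_one _
  have h2 := QQ_mul_bet n
  have hb := bet_pos n
  have h3 : xg g i * QQ n * bet n < ((kk n g i : ℝ) + 1) * bet n := by gcongr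
  calc xg g i = xg g i * ((QQ n : ℝ) * bet n) := by rw [h2, mul_one]
    _ = xg g i * QQ n * bet n := by ring
    _ < ((kk n g i : ℝ) + 1) * bet n := h3
    _ = (kk n g i : ℝ) * bet n + bet n := by ring

lemma kk_lt_QQ (n : ℕ) (g : Tω) (i : ℕ) : kk n g i < QQ n := by
  have hq : (0:ℝ) < QQ n := by exact_mod_cast QQ_pos n
  have h1 : xg g i * QQ n < QQ n := by
    have := (xg_mem g i).2
    nlinarith [(xg_mem g i).1]
  exact Nat.floor_lt (mul_nonneg (xg_mem g i).1 hq.le) |>.mpr h1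

lemma xg_mem_cc (n : ℕ) (g : Tω) (i : ℕ) :
    xg g i ∈ Set.Icc (cc n g i) (cc n g i + alp n) := by
  have ha := alp_pos n
  by_cases h : exceedP n g i
  · simp only [cc, if_pos h]
    constructor <;> linarith
  · simp only [cc, if_neg h]
    have h1 := kk_le n g i
    simp only [exceedP, not_lt] at h
    exact ⟨h1, h⟩

lemma sideLen_sq (d : ℕ) (i : ℕ) :
    sideLen (d^2) i = if i < d then some d else none := by
  have h1 : Nat.sqrt (d^2) = d := Nat.sqrt_eq' d
  have h2 : d^2 - (Nat.sqrt (d^2)) * (Nat.sqrt (d^2)) = 0 := by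
    rw [h1]; simp [pow_two]
  simp only [sideLen, h1, h2, if_pos rfl]
  rw [pow_two] at *
  simp

lemma Vcell_sq (d : ℕ) :
    Vcell (d^2) = {y : Tω | ∀ i, i < d → y i ∈ arcIoo 0 ((2:ℝ)⁻¹^d)} := by
  ext y
  simp only [Vcell, Set.mem_pi, Set.mem_univ, true_implies, Set.mem_setOf_eq]
  constructor
  · intro H i hi
    have := H i
    rw [sideLen_sq d i, if_pos hi] at this
    simpa [arc, arcIoo] using this
  · intro H i
    rw [sideLen_sq d i]
    by_cases hi : i < d
    · rw [if_pos hi]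
      simpa [arc, arcIoo] using H i hi
    · rw [if_neg hi]
      simp

lemma tmk_add (x y : ℝ) : tmk (x + y) = tmk x + tmk y := rfl

lemma tmk_sub (x y : ℝ) : tmk (x - y) = tmk x - tmk y := rfl

lemma mem_arc_sub_iff (c l : ℝ) (z : 𝕋) :
    z - tmk c ∈ arcIoo 0 l ↔ z ∈ arcIoo c (c + l) := by
  constructor
  · rintro ⟨u, hu, hzu⟩
    refine ⟨c + u, ?_, ?_⟩
    · simp only [Set.mem_Ioo] at hu ⊢
      constructor <;> linarith [hu.1, hu.2]
    · rw [tmk_add, hzu]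
      abel
  · rintro ⟨v, hv, hzv⟩
    refine ⟨v - c, ?_, ?_⟩
    · simp only [Set.mem_Ioo] at hv ⊢
      constructor <;> linarith [hv.1, hv.2]
    · rw [tmk_sub, hzv]

lemma alp_eq (n : ℕ) : (2:ℝ)⁻¹^(dd n) = alp n := rfl

lemma mem_Bbox (n : ℕ) (g : Tω) (z : Tω) :
    z ∈ Bbox n g ↔ ∀ i, i < dd n → z i ∈ arcIoo (cc n g i) (cc n g i + alp n) := by
  rw [Bbox, Vcell_sq]
  constructor
  · rintro ⟨y, hy, rfl⟩ i hi
    have h1 := hy i hi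
    have h2 : (ttau n g + y) i - tmk (cc n g i) ∈ arcIoo 0 (alp n) := by
      have : (ttau n g + y) i - tmk (cc n g i) = y i := by
        simp only [Pi.add_apply, ttau, if_pos hi]
        abel
      rw [this]
      rwa [alp_eq] at h1
    exact (mem_arc_sub_iff _ _ _).mp h2
  · intro H
    refine ⟨z - ttau n g, ?_, by simp⟩
    intro i hi
    rw [alp_eq]
    have : (z - ttau n g) i = z i - tmk (cc n g i) := by
      simp only [Pi.sub_apply, ttau, if_pos hi]
    rw [this]
    exact (mem_arc_sub_iff _ _ _).mpr (H i hi)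

lemma Bbox_mem_RdF (n : ℕ) (g : Tω) : Bbox n g ∈ RdF := by
  refine ⟨(dd n)^2, ?_, ttau n g, rfl⟩
  exact pow_pos (dd_pos n) 2

lemma measurableSet_Bbox (n : ℕ) (g : Tω) : MeasurableSet (Bbox n g) := by
  have : Bbox n g = ⋂ i ∈ {i : ℕ | i < dd n},
      (fun z : Tω => z i) ⁻¹' (arcIoo (cc n g i) (cc n g i + alp n)) := by
    ext z
    simp [mem_Bbox n g z]
  rw [this]
  exact MeasurableSet.biInter (Set.to_countable _)
    (fun i _ => (measurable_pi_apply i) (measurableSet_arcIoo _ _))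

lemma mem_closure_Bbox (n : ℕ) (g : Tω) : g ∈ closure (Bbox n g) := by
  have hBpi : Bbox n g = Set.pi Set.univ (fun i =>
      if i < dd n then arcIoo (cc n g i) (cc n g i + alp n) else Set.univ) := by
    ext z
    rw [mem_Bbox]
    simp only [Set.mem_pi, Set.mem_univ, true_implies]
    constructor
    · intro H i
      by_cases hi : i < dd n
      · rw [if_pos hi]; exact H i hi
      · rw [if_neg hi]; trivial
    · intro H i hi
      have := H i
      rwa [if_pos hi] at this
  rw [hBpi, closure_pi_set]
  intro i _
  simp only [Function.comp]
  by_cases hi : i < dd n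
  · rw [if_pos hi]
    have hne : cc n g i ≠ cc n g i + alp n := by
      have := alp_pos n; linarith
    have h1 : g i ∈ tmk '' Set.Icc (cc n g i) (cc n g i + alp n) :=
      ⟨xg g i, xg_mem_cc n g i, tmk_rep _⟩
    have h2 : tmk '' Set.Icc (cc n g i) (cc n g i + alp n)
        ⊆ closure (arcIoo (cc n g i) (cc n g i + alp n)) := by
      rw [arcIoo, ← closure_Ioo hne]
      exact (image_closure_subset_closure_image tmk_continuous)
    exact h2 h1
  · rw [if_neg hi]
    simp

lemma haar_Bbox (n : ℕ) (g : Tω) :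
    haarTω (Bbox n g) = ENNReal.ofReal ((alp n)^(dd n)) := by
  have hset : Bbox n g = {z : Tω | ∀ i, i < dd n →
      z i ∈ arcIoo (cc n g i) (cc n g i + alp n)} := by
    ext z; exact mem_Bbox n g z
  rw [hset, haar_cylinder (dd n) _ (fun i => measurableSet_arcIoo _ _)]
  have : ∀ i ∈ Finset.range (dd n),
      volume (arcIoo (cc n g i) (cc n g i + alp n)) = ENNReal.ofReal (alp n) := by
    intro i _
    exact volume_arcIoo _ (alp_pos n).le (alp_le_one n)
  rw [Finset.prod_congr rfl this, Finset.prod_const, Finset.card_range,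
    ← ENNReal.ofReal_pow (alp_pos n).le]

lemma exceed_mem_excT {n : ℕ} {g : Tω} {i : ℕ} (h : exceedP n g i) : g i ∈ excT n := by
  rw [excT]
  have h2 := lt_kk_succ n g i
  simp only [Set.mem_iUnion, exists_prop]
  exact ⟨kk n g i, Finset.mem_range.mpr (kk_lt_QQ n g i),
    xg g i, ⟨h, by linarith⟩, tmk_rep _⟩

lemma card_exceed_le {n : ℕ} {g : Tω} (hg : g ∉ BadS n) :
    ((Finset.range (dd n)).filter (exceedP n g)).card ≤ tt n := by
  by_contra hcon
  push_neg at hcon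
  obtain ⟨S, hSsub, hScard⟩ := Finset.exists_subset_card_eq hcon.le
  apply hg
  rw [BadS]
  simp only [Set.mem_iUnion, exists_prop]
  refine ⟨S, Finset.mem_powersetCard.mpr
      ⟨hSsub.trans (Finset.filter_subset _ _), hScard⟩, ?_⟩
  intro i hi
  exact exceed_mem_excT (Finset.mem_filter.mp (hSsub hi)).2

lemma volume_inter_core_ge (n : ℕ) (g : Tω) (i : ℕ) :
    ENNReal.ofReal (if exceedP n g i then alp n * (1 - 2 * pp n) else alp n)
      ≤ volume (arcIoo (cc n g i) (cc n g i + alp n) ∩ coreT n) := by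
  have ha := alp_pos n
  have hb := bet_pos n
  have hp := pp_pos n
  have hps := pp_small n
  have hk1 := kk_le n g i
  have hk2 := lt_kk_succ n g i
  have hkQ : (kk n g i) ∈ Finset.range (QQ n) := Finset.mem_range.mpr (kk_lt_QQ n g i)
  by_cases h : exceedP n g i
  · rw [if_pos h]
    simp only [exceedP] at h
    -- the sub-arc (x-α, kβ+α)
    set u := xg g i - alp n with hu
    set v := (kk n g i : ℝ) * bet n + alp n with hv
    have hsub1 : arcIoo u v ⊆ arcIoo (cc n g i) (cc n g i + alp n) := by
      apply Set.image_mono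
      apply Set.Ioo_subset_Ioo
      · simp [cc, if_pos (show exceedP n g i from h), hu]
      · simp only [cc, if_pos (show exceedP n g i from h), hu, hv]
        linarith
    have hsub2 : arcIoo u v ⊆ coreT n := by
      intro z hz
      rw [coreT]
      simp only [Set.mem_iUnion, exists_prop]
      exact ⟨kk n g i, hkQ,
        Set.image_mono (Set.Ioo_subset_Ioo (by linarith) (by linarith)) hz⟩
    have hlen : v - u ≥ alp n * (1 - 2 * pp n) := by
      -- v - u = kβ + 2α - x > 2α - β ≥ α(1-2p)
      have h1 : v - u > 2 * alp n - bet n := by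
        simp only [hu, hv]
        linarith
      have h2 : alp n * (1 - 2 * pp n) ≤ 2 * alp n - bet n := by
        -- β ≤ α(1+2p) ⟺ 1 ≤ (1-p)(1+2p)
        have hQa := QQ_mul_alp n
        have hQb := QQ_mul_bet n
        have hq : (0:ℝ) < QQ n := by exact_mod_cast QQ_pos n
        nlinarith
      linarith
    have hpos : u < v := by
      have := alp_pos n
      nlinarith [hlen, alp_pos n, pp_small n, pp_pos n]
    calc ENNReal.ofReal (alp n * (1 - 2 * pp n)) ≤ ENNReal.ofReal (v - u) :=
          ENNReal.ofReal_le_ofReal hlen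
      _ = volume (arcIoo u v) := by
          rw [show v = u + (v - u) by ring]
          rw [volume_arcIoo u (by linarith) (by
            have : v - u ≤ alp n := by simp only [hu, hv]; linarith
            linarith [alp_le_one n])]
          simp
      _ ≤ volume (arcIoo (cc n g i) (cc n g i + alp n) ∩ coreT n) :=
          measure_mono (Set.subset_inter hsub1 hsub2)
  · rw [if_neg h]
    have hcc : cc n g i = (kk n g i : ℝ) * bet n := by simp [cc, if_neg h]
    have hsub : arcIoo (cc n g i) (cc n g i + alp n) ⊆ coreT n := by
      rw [hcc]
      intro z hz
      rw [coreT]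
      simp only [Set.mem_iUnion, exists_prop]
      exact ⟨kk n g i, hkQ, hz⟩
    rw [Set.inter_eq_left.mpr hsub]
    rw [volume_arcIoo _ (alp_pos n).le (alp_le_one n)]

lemma haar_Bbox_inter_Oset (n : ℕ) (g : Tω) (hg : g ∉ BadS n) :
    ENNReal.ofReal ((alp n)^(dd n) * (1 - 2 * pp n)^(tt n))
      ≤ haarTω (Bbox n g ∩ OsetS n) := by
  have ha := alp_pos n
  have hp := pp_pos n
  have hps := pp_small n
  have hset : Bbox n g ∩ OsetS n = {z : Tω | ∀ i, i < dd n →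
      z i ∈ arcIoo (cc n g i) (cc n g i + alp n) ∩ coreT n} := by
    ext z
    simp only [Set.mem_inter_iff, mem_Bbox, OsetS, Set.mem_setOf_eq]
    constructor
    · rintro ⟨h1, h2⟩ i hi
      exact ⟨h1 i hi, h2 i hi⟩
    · intro H
      exact ⟨fun i hi => (H i hi).1, fun i hi => (H i hi).2⟩
  rw [hset, haar_cylinder (dd n) _
    (fun i => (measurableSet_arcIoo _ _).inter (measurableSet_coreT n))]
  set E := ((Finset.range (dd n)).filter (exceedP n g)).card with hE
  have hEt : E ≤ tt n := card_exceed_le hg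
  calc ENNReal.ofReal ((alp n)^(dd n) * (1 - 2 * pp n)^(tt n))
      ≤ ENNReal.ofReal (∏ i ∈ Finset.range (dd n),
          (if exceedP n g i then alp n * (1 - 2 * pp n) else alp n)) := by
        apply ENNReal.ofReal_le_ofReal
        rw [Finset.prod_ite, Finset.prod_const, Finset.prod_const, ← hE]
        have hcards : E + ((Finset.range (dd n)).filter (fun i => ¬ exceedP n g i)).card
            = dd n := by
          rw [hE]
          rw [Finset.card_filter_add_card_filter_not]
          exact Finset.card_range _
        set E' := ((Finset.range (dd n)).filter (fun i => ¬ exceedP n g i)).card with hE'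
        have h1 : (alp n * (1 - 2*pp n))^E * (alp n)^E'
            = (alp n)^(dd n) * (1 - 2*pp n)^E := by
          rw [mul_pow, ← hcards, pow_add]
          ring
        rw [h1]
        have h2 : (1 - 2*pp n)^(tt n) ≤ (1 - 2*pp n)^E :=
          pow_le_pow_of_le_one (by linarith) (by linarith) hEt
        have h3 : (0:ℝ) ≤ (alp n)^(dd n) := by positivity
        exact mul_le_mul_of_nonneg_left h2 h3
    _ = ∏ i ∈ Finset.range (dd n),
          ENNReal.ofReal (if exceedP n g i then alp n * (1 - 2 * pp n) else alp n) := by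
        rw [ENNReal.ofReal_prod_of_nonneg]
        intro i _
        by_cases h : exceedP n g i
        · rw [if_pos h]; nlinarith
        · rw [if_neg h]; positivity
    _ ≤ ∏ i ∈ Finset.range (dd n),
          volume (arcIoo (cc n g i) (cc n g i + alp n) ∩ coreT n) :=
        Finset.prod_le_prod' (fun i _ => volume_inter_core_ge n g i)

end Aux6
noncomputable section Aux7
open MeasureTheory Filter Topology Set
open scoped ENNReal
open Classical

lemma bernoulli_half (n : ℕ) : (1/2 : ℝ) ≤ (1 - 2 * pp n)^(tt n) := by
  have h := one_add_mul_le_pow (a := -(2 * pp n)) (by nlinarith [pp_small n, pp_pos n]) (tt n)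
  have htp := tt_mul_pp n
  have : (1:ℝ) + (tt n : ℝ) * (-(2 * pp n)) = 1/2 := by nlinarith
  calc (1/2:ℝ) = 1 + (tt n : ℝ) * (-(2 * pp n)) := this.symm
    _ ≤ (1 + (-(2 * pp n)))^(tt n) := h
    _ = (1 - 2 * pp n)^(tt n) := by ring_nf

lemma avg_Bbox_ge (k : ℕ) (g : Tω) (hg : g ∉ BadS (k+4)) :
    (1/2 : ℝ) ≤ avg ff (Bbox (k+4) g) := by
  set n := k + 4 with hn
  have halp := alp_pos n
  have hαd : (0:ℝ) < (alp n)^(dd n) := by positivity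
  have htoReal : (haarTω (Bbox n g)).toReal = (alp n)^(dd n) := by
    rw [haar_Bbox n g, ENNReal.toReal_ofReal hαd.le]
  have hind : ∫ x in Bbox n g, (OsetS n).indicator (fun _ => (1:ℝ)) x ∂haarTω
      = (haarTω (OsetS n ∩ Bbox n g)).toReal := by
    rw [setIntegral_indicator (measurableSet_OsetS n), setIntegral_const, smul_eq_mul,
      mul_one, Set.inter_comm]
    rfl
  have hmono : ∫ x in Bbox n g, (OsetS n).indicator (fun _ => (1:ℝ)) x ∂haarTω
      ≤ ∫ x in Bbox n g, ff x ∂haarTω := by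
    apply integral_mono_ae
    · exact (integrable_const (1:ℝ)).indicator (measurableSet_OsetS n) |>.integrableOn
    · exact integrable_ff.integrableOn
    · exact ae_restrict_of_ae (ff_ge_indicator_ae k)
  have hOB : ENNReal.ofReal ((alp n)^(dd n) * (1 - 2*pp n)^(tt n))
      ≤ haarTω (OsetS n ∩ Bbox n g) := by
    rw [Set.inter_comm]
    exact haar_Bbox_inter_Oset n g hg
  have hfin : haarTω (OsetS n ∩ Bbox n g) ≠ ∞ := measure_ne_top _ _
  have h2 : (alp n)^(dd n) * (1 - 2*pp n)^(tt n)
      ≤ (haarTω (OsetS n ∩ Bbox n g)).toReal :=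
    (ENNReal.ofReal_le_iff_le_toReal hfin).mp hOB
  have hchain : (alp n)^(dd n) * (1 - 2*pp n)^(tt n) ≤ ∫ x in Bbox n g, ff x ∂haarTω := by
    calc (alp n)^(dd n) * (1 - 2*pp n)^(tt n)
        ≤ (haarTω (OsetS n ∩ Bbox n g)).toReal := h2
      _ = ∫ x in Bbox n g, (OsetS n).indicator (fun _ => (1:ℝ)) x ∂haarTω := hind.symm
      _ ≤ ∫ x in Bbox n g, ff x ∂haarTω := hmono
  rw [avg, setAverage_eq, measureReal_def, htoReal, smul_eq_mul]
  calc (1/2:ℝ) ≤ (1 - 2*pp n)^(tt n) := bernoulli_half n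
    _ = ((alp n)^(dd n))⁻¹ * ((alp n)^(dd n) * (1 - 2*pp n)^(tt n)) := by
        field_simp
    _ ≤ ((alp n)^(dd n))⁻¹ * ∫ x in Bbox n g, ff x ∂haarTω := by
        apply mul_le_mul_of_nonneg_left hchain
        positivity

lemma norm_T_le_half (z : 𝕋) : ‖z‖ ≤ 1/2 := by
  have := AddCircle.norm_le_half_period (p := (1:ℝ)) (x := z) one_ne_zero
  simpa using this

lemma norm_tmk_le {x : ℝ} (hx : |x| < 1/2) : ‖tmk x‖ ≤ |x| := by
  have h1 : ‖tmk x‖ = |x - round ((1:ℝ)⁻¹ * x) * 1| := AddCircle.norm_eq (1:ℝ)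
  have h2 : round ((1:ℝ)⁻¹ * x) = 0 := by
    rw [round_eq_zero_iff]
    rw [inv_one, one_mul]
    constructor
    · cases abs_lt.mp hx with
      | intro hl hr => linarith
    · cases abs_lt.mp hx with
      | intro hl hr => linarith
  rw [h1, h2]
  simp

lemma rho_nonneg (z w : Tω) : 0 ≤ rho z w :=
  tsum_nonneg (fun i => by positivity)

lemma rho_summable (z w : Tω) : Summable (fun i : ℕ => (1/2 : ℝ)^(i+1) * ‖z i - w i‖) := by
  apply Summable.of_nonneg_of_le (fun i => by positivity) (fun i => ?_) summable_geometric_two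
  calc (1/2 : ℝ)^(i+1) * ‖z i - w i‖ ≤ (1/2)^(i+1) * (1/2) :=
        mul_le_mul_of_nonneg_left (norm_T_le_half _) (by positivity)
    _ ≤ (1/2)^i * 1 := by
        rw [pow_succ]
        have h : (0:ℝ) ≤ (1/2:ℝ)^i := by positivity
        nlinarith
    _ = (1/2 : ℝ)^i := mul_one _

lemma rho_le_of_mem_Bbox (n : ℕ) (g : Tω) {z w : Tω}
    (hz : z ∈ Bbox n g) (hw : w ∈ Bbox n g) :
    rho z w ≤ 2 * (1/2 : ℝ)^(dd n) := by
  have halp := alp_pos n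
  have halp_half : alp n ≤ 1/2 := by
    rw [alp]
    calc (2:ℝ)⁻¹^(dd n) ≤ (2:ℝ)⁻¹^1 :=
      pow_le_pow_of_le_one (by norm_num) (by norm_num) (dd_pos n)
    _ = 1/2 := by norm_num
  have hcoord : ∀ i, i < dd n → ‖z i - w i‖ ≤ alp n := by
    intro i hi
    obtain ⟨u, hu, hzu⟩ := (mem_Bbox n g z).mp hz i hi
    obtain ⟨v, hv, hwv⟩ := (mem_Bbox n g w).mp hw i hi
    have hzw : z i - w i = tmk (u - v) := by rw [tmk_sub, hzu, hwv]
    have habs : |u - v| < alp n := by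
      simp only [Set.mem_Ioo] at hu hv
      rw [abs_lt]
      constructor <;> linarith [hu.1, hu.2, hv.1, hv.2]
    rw [hzw]
    calc ‖tmk (u-v)‖ ≤ |u - v| := norm_tmk_le (lt_of_lt_of_le habs halp_half)
      _ ≤ alp n := habs.le
  rw [rho, ← Summable.sum_add_tsum_nat_add (dd n) (rho_summable z w)]
  have hpart1 : ∑ i ∈ Finset.range (dd n), (1/2 : ℝ)^(i+1) * ‖z i - w i‖ ≤ alp n := by
    calc ∑ i ∈ Finset.range (dd n), (1/2 : ℝ)^(i+1) * ‖z i - w i‖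
        ≤ ∑ i ∈ Finset.range (dd n), (1/2 : ℝ)^(i+1) * alp n := by
          apply Finset.sum_le_sum
          intro i hi
          exact mul_le_mul_of_nonneg_left (hcoord i (Finset.mem_range.mp hi)) (by positivity)
      _ = (∑ i ∈ Finset.range (dd n), (1/2 : ℝ)^(i+1)) * alp n := by
          rw [Finset.sum_mul]
      _ ≤ 1 * alp n := by
          apply mul_le_mul_of_nonneg_right _ halp.le
          have h1 : ∀ i ∈ Finset.range (dd n), (1/2 : ℝ)^(i+1) = (1/2) * (1/2)^i := by
            intro i _; rw [pow_succ]; ring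
          rw [Finset.sum_congr rfl h1, ← Finset.mul_sum]
          have := sum_geometric_two_le (dd n)
          linarith
      _ = alp n := one_mul _
  have hpart2 : ∑' i : ℕ, (1/2 : ℝ)^((i + dd n)+1) * ‖z (i + dd n) - w (i + dd n)‖
      ≤ (1/2 : ℝ)^(dd n) := by
    have hle : ∀ i : ℕ, (1/2:ℝ)^((i + dd n)+1) * ‖z (i + dd n) - w (i + dd n)‖
        ≤ ((1/2:ℝ)^(dd n) * (1/4)) * (1/2)^i := by
      intro i
      rw [show (i + dd n) + 1 = dd n + (i + 1) from by omega, pow_add, pow_succ]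
      calc (1/2:ℝ)^(dd n) * ((1/2)^i * (1/2)) * ‖z (i + dd n) - w (i + dd n)‖
          ≤ (1/2:ℝ)^(dd n) * ((1/2)^i * (1/2)) * (1/2) := by
            apply mul_le_mul_of_nonneg_left (norm_T_le_half _) (by positivity)
        _ = ((1/2:ℝ)^(dd n) * (1/4)) * (1/2)^i := by ring
    have hsum_rhs : Summable (fun i : ℕ => ((1/2:ℝ)^(dd n) * (1/4)) * (1/2)^i) :=
      summable_geometric_two.mul_left _
    have hsum_lhs : Summable (fun i : ℕ =>
        (1/2 : ℝ)^((i + dd n)+1) * ‖z (i + dd n) - w (i + dd n)‖) := by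
      have := (summable_nat_add_iff (f := fun i : ℕ => (1/2 : ℝ)^(i+1) * ‖z i - w i‖)
        (dd n)).mpr (rho_summable z w)
      exact this
    calc ∑' i : ℕ, (1/2 : ℝ)^((i + dd n)+1) * ‖z (i + dd n) - w (i + dd n)‖
        ≤ ∑' i : ℕ, ((1/2:ℝ)^(dd n) * (1/4)) * (1/2)^i := Summable.tsum_le_tsum hle hsum_lhs hsum_rhs
      _ = ((1/2:ℝ)^(dd n) * (1/4)) * 2 := by rw [tsum_mul_left, tsum_geometric_two]
      _ = (1/2:ℝ)^(dd n) * (1/2) := by ring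
      _ ≤ (1/2:ℝ)^(dd n) := by
          have : (0:ℝ) ≤ (1/2:ℝ)^(dd n) := by positivity
          linarith
  have halp_eq : alp n = (1/2:ℝ)^(dd n) := by rw [alp]; norm_num
  calc (∑ i ∈ Finset.range (dd n), (1/2 : ℝ)^(i+1) * ‖z i - w i‖)
        + ∑' i : ℕ, (1/2 : ℝ)^((i + dd n)+1) * ‖z (i + dd n) - w (i + dd n)‖
      ≤ alp n + (1/2:ℝ)^(dd n) := add_le_add hpart1 hpart2
    _ = 2 * (1/2:ℝ)^(dd n) := by rw [halp_eq]; ring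

lemma diam_nonneg' (E : Set Tω) : 0 ≤ diam E := by
  apply Real.sSup_nonneg
  rintro x ⟨z, hz, w, hw, rfl⟩
  exact rho_nonneg z w

lemma diam_Bbox_le (n : ℕ) (g : Tω) : diam (Bbox n g) ≤ 2 * (1/2 : ℝ)^(dd n) := by
  apply Real.sSup_le
  · rintro x ⟨z, hz, w, hw, rfl⟩
    exact rho_le_of_mem_Bbox n g hz hw
  · positivity

end Aux7
open MeasureTheory Filter Topology Set
open scoped ENNReal

/-- The Rubio de Francia basis `R` does not differentiate `L¹(𝕋^ω)`. -/
theorem rubioDeFrancia_not_differentiates_L1 :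
    ∃ f : Tω → ℝ, Integrable f haarTω ∧
      ∃ E : Set Tω, 0 < haarTω E ∧
        ∀ g ∈ E, ∃ S : ℕ → Set Tω, ContractsTo (basisOf RdF) S g ∧
          ¬ Tendsto (fun n => avg f (S n)) atTop (𝓝 (f g)) := by
  refine ⟨ff, integrable_ff, Eset, haar_Eset_pos, ?_⟩
  intro g hg
  obtain ⟨hBad, hO⟩ := hg
  refine ⟨fun k => Bbox (k+4) g, ⟨?_, ?_⟩, ?_⟩
  · intro k
    exact ⟨Bbox_mem_RdF _ g, mem_closure_Bbox _ g⟩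
  · have hb1 : ∀ k : ℕ, diam (Bbox (k+4) g) ≤ 2 * (1/2:ℝ)^k := by
      intro k
      calc diam (Bbox (k+4) g) ≤ 2 * (1/2:ℝ)^(dd (k+4)) := diam_Bbox_le _ g
        _ ≤ 2 * (1/2:ℝ)^k := by
            have hk : k ≤ dd (k+4) := le_trans (by omega) (dd_ge (k+4))
            have := pow_le_pow_of_le_one (by norm_num : (0:ℝ) ≤ 1/2)
              (by norm_num : (1/2:ℝ) ≤ 1) hk
            linarith
    have hlim : Tendsto (fun k : ℕ => 2 * (1/2:ℝ)^k) atTop (𝓝 0) := by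
      have h := tendsto_pow_atTop_nhds_zero_of_lt_one
        (by norm_num : (0:ℝ) ≤ 1/2) (by norm_num : (1/2:ℝ) < 1)
      have h2 := h.const_mul (2:ℝ)
      simpa using h2
    exact squeeze_zero (fun k => diam_nonneg' _) hb1 hlim
  · intro hT
    have hf0 : ff g = 0 := ff_eq_zero hO
    rw [hf0] at hT
    have hev : ∀ᶠ k in atTop, avg ff (Bbox (k+4) g) < 1/2 :=
      hT (Iio_mem_nhds (by norm_num))
    obtain ⟨k, hk⟩ := hev.exists
    exact absurd (avg_Bbox_ge k g (hBad k)) (not_le.mpr hk)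
end

section
/- Fix an integer n ≥ 1 and strictly positive real numbers α_1, …, α_{n²}. Let I = ∏_{i=1}^{n²} (0, α_i) ⊆ ℝ^{n²}, let (1+1/n)I = ∏_{i=1}^{n²} (0, (1+1/n)α_i), and let J = {x = (x_1,…,x_{n²}) ∈ (1+1/n)I : #{i ∈ {1,…,n²} : x_i ∈ [α_i, (1+1/n)α_i)} ≥ 4n}. Then the Lebesgue measures satisfy |J| < (1/2)·|(1+1/n)I|. -/
open MeasureTheory Filter Topology Set
open scoped ENNReal

/-- `(n+1)^n ≤ 3·n^n`, via `1 + 1/n ≤ e^{1/n}` and `e < 3`. -/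
lemma succ_pow_le_three_mul_pow (n : ℕ) (hn : 1 ≤ n) : (n + 1) ^ n ≤ 3 * n ^ n := by
  have hn0 : (0 : ℝ) < n := by exact_mod_cast hn
  have key : ((n : ℝ) + 1) ^ n ≤ 3 * (n : ℝ) ^ n := by
    have h1 : ((n : ℝ) + 1) = n * (1 + 1 / n) := by field_simp
    have h2 : (1 + 1 / (n : ℝ)) ≤ Real.exp (1 / n) := by
      have := Real.add_one_le_exp (1 / (n : ℝ)); linarith
    have h3 : (0 : ℝ) ≤ 1 + 1 / (n : ℝ) := by positivity
    calc ((n : ℝ) + 1) ^ n = (n : ℝ) ^ n * (1 + 1 / n) ^ n := by rw [h1, mul_pow]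
      _ ≤ (n : ℝ) ^ n * Real.exp (1 / n) ^ n := by
          gcongr
      _ = (n : ℝ) ^ n * Real.exp 1 := by
          rw [← Real.exp_nat_mul]
          congr 1
          field_simp
      _ ≤ 3 * (n : ℝ) ^ n := by nlinarith [Real.exp_one_lt_d9, pow_pos hn0 n]
  exact_mod_cast key

/-- Key factorial bound: `2·n^{4n} < (4n)!` for `n ≥ 1`. -/
lemma two_mul_pow_lt_factorial (n : ℕ) (hn : 1 ≤ n) :
    2 * n ^ (4 * n) < Nat.factorial (4 * n) := by
  induction n, hn using Nat.le_induction with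
  | base => decide
  | succ n hn ih =>
    have h81 : (n + 1) ^ (4 * n) ≤ 81 * n ^ (4 * n) := by
      have h := succ_pow_le_three_mul_pow n hn
      calc (n + 1) ^ (4 * n) = ((n + 1) ^ n) ^ 4 := by rw [← pow_mul, Nat.mul_comm n 4]
        _ ≤ (3 * n ^ n) ^ 4 := Nat.pow_le_pow_left h 4
        _ = 81 * (n ^ n) ^ 4 := by ring
        _ = 81 * n ^ (4 * n) := by rw [← pow_mul, Nat.mul_comm n 4]
    have hfac : Nat.factorial (4 * (n + 1)) =
        (4 * n + 4) * ((4 * n + 3) * ((4 * n + 2) * ((4 * n + 1) * Nat.factorial (4 * n)))) := by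
      have h4 : 4 * (n + 1) = 4 * n + 1 + 1 + 1 + 1 := by ring
      rw [h4]
      simp [Nat.factorial_succ]
    have hquart : 81 * (n + 1) ^ 4 ≤ (4 * n + 1) * (4 * n + 2) * (4 * n + 3) * (4 * n + 4) := by
      nlinarith [hn, sq_nonneg n]
    calc 2 * (n + 1) ^ (4 * (n + 1))
        = (n + 1) ^ 4 * (2 * (n + 1) ^ (4 * n)) := by rw [show 4 * (n+1) = 4*n + 4 by ring, pow_add]; ring
      _ ≤ (n + 1) ^ 4 * (2 * (81 * n ^ (4 * n))) := by
          exact Nat.mul_le_mul_left _ (Nat.mul_le_mul_left _ h81)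
      _ = (81 * (n + 1) ^ 4) * (2 * n ^ (4 * n)) := by ring
      _ < (81 * (n + 1) ^ 4) * Nat.factorial (4 * n) := by
          exact mul_lt_mul_of_pos_left ih (by positivity)
      _ ≤ ((4 * n + 1) * (4 * n + 2) * (4 * n + 3) * (4 * n + 4)) * Nat.factorial (4 * n) := by
          exact Nat.mul_le_mul_right _ hquart
      _ = Nat.factorial (4 * (n + 1)) := by rw [hfac]; ring

/-- The combinatorial bound: `2·C(n², 4n) < (n+1)^{4n}`. -/
lemma two_mul_choose_lt (n : ℕ) (hn : 1 ≤ n) :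
    2 * (n ^ 2).choose (4 * n) < (n + 1) ^ (4 * n) := by
  have hd := Nat.descFactorial_eq_factorial_mul_choose (n ^ 2) (4 * n)
  have h1 : (n ^ 2).descFactorial (4 * n) ≤ (n * (n + 1)) ^ (4 * n) :=
    le_trans (Nat.descFactorial_le_pow _ _) (Nat.pow_le_pow_left (by nlinarith) _)
  have h2 := two_mul_pow_lt_factorial n hn
  have key : Nat.factorial (4 * n) * (2 * (n ^ 2).choose (4 * n)) <
      Nat.factorial (4 * n) * (n + 1) ^ (4 * n) := by
    calc Nat.factorial (4 * n) * (2 * (n ^ 2).choose (4 * n))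
        = 2 * (Nat.factorial (4 * n) * (n ^ 2).choose (4 * n)) := by ring
      _ = 2 * (n ^ 2).descFactorial (4 * n) := by rw [← hd]
      _ ≤ 2 * (n * (n + 1)) ^ (4 * n) := Nat.mul_le_mul_left _ h1
      _ = (2 * n ^ (4 * n)) * (n + 1) ^ (4 * n) := by rw [mul_pow]; ring
      _ < Nat.factorial (4 * n) * (n + 1) ^ (4 * n) :=
          mul_lt_mul_of_pos_right h2 (by positivity)
  exact Nat.lt_of_mul_lt_mul_left key

/-- Lemma 3.1: For `n ≥ 1` and `α₁,…,α_{n²} > 0`, the set `J` of points of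
the dilated box `(1+1/n)·I` having at least `4n` coordinates in `[αᵢ, (1+1/n)αᵢ)`
satisfies `|J| < (1/2)·|(1+1/n)·I|`. -/
theorem measure_Jset_lt_half (n : ℕ) (hn : 1 ≤ n) (α : Fin (n ^ 2) → ℝ)
    (hα : ∀ i, 0 < α i) :
    volume (Jset n α) < 2⁻¹ * volume (bigBox n α) := by
  classical
  have hn0 : (0 : ℝ) < n := by exact_mod_cast hn
  set β : Fin (n ^ 2) → ℝ := fun i => (1 + 1 / (n : ℝ)) * α i with hβdef
  have hβpos : ∀ i, 0 < β i := fun i => by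
    have := hα i; have : (0:ℝ) < 1 + 1/(n:ℝ) := by positivity
    exact mul_pos this (hα i)
  have hβsub : ∀ i, β i - α i = α i / n := by
    intro i; rw [hβdef]; field_simp; ring
  -- Volume of the big box
  have hV : volume (bigBox n α) = ∏ i, ENNReal.ofReal (β i) := by
    rw [bigBox, volume_pi_pi]
    simp only [Real.volume_Ioo, sub_zero]
    rfl
  have hVne : volume (bigBox n α) ≠ 0 := by
    rw [hV]
    refine (Finset.prod_ne_zero_iff).mpr fun i _ => ?_
    simp only [ne_eq, ENNReal.ofReal_eq_zero, not_le]
    exact hβpos i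
  have hVtop : volume (bigBox n α) ≠ ⊤ := by
    rw [hV]
    exact (ENNReal.prod_lt_top fun i _ => ENNReal.ofReal_lt_top).ne
  set q : ℝ≥0∞ := ENNReal.ofReal (1 / ((n : ℝ) + 1)) with hq
  -- the covering sets
  set A : Finset (Fin (n ^ 2)) → Set (Fin (n ^ 2) → ℝ) := fun S =>
    Set.pi Set.univ (fun i => if i ∈ S then Set.Ico (α i) (β i) else Set.Ioo 0 (β i)) with hA
  have hAvol : ∀ S : Finset (Fin (n ^ 2)),
      volume (A S) = q ^ S.card * volume (bigBox n α) := by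
    intro S
    rw [hA, volume_pi_pi, hV]
    have hfac : ∀ i, volume (if i ∈ S then Set.Ico (α i) (β i) else Set.Ioo 0 (β i)) =
        (if i ∈ S then q else 1) * ENNReal.ofReal (β i) := by
      intro i
      by_cases h : i ∈ S
      · simp only [h, if_true, Real.volume_Ico]
        rw [hβsub i, hq, ← ENNReal.ofReal_mul (by positivity)]
        congr 1
        rw [hβdef]
        field_simp
      · simp only [h, if_false, Real.volume_Ioo, sub_zero, one_mul]
    rw [Finset.prod_congr rfl fun i _ => hfac i, Finset.prod_mul_distrib,
      Finset.prod_ite_mem, Finset.univ_inter, Finset.prod_const]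
  -- Jset is covered by the A S with S of cardinality 4n
  have hsub : Jset n α ⊆
      ⋃ S ∈ Finset.powersetCard (4 * n) (Finset.univ : Finset (Fin (n ^ 2))), A S := by
    intro x hx
    obtain ⟨hxB, hxc⟩ := hx
    obtain ⟨S, hS, hScard⟩ := Finset.exists_subset_card_eq hxc
    refine Set.mem_iUnion₂.mpr ⟨S, Finset.mem_powersetCard.mpr ⟨Finset.subset_univ _, hScard⟩, ?_⟩
    intro i _
    by_cases h : i ∈ S
    · simp only [h, if_true]
      exact (Finset.mem_filter.mp (hS h)).2
    · simp only [h, if_false]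
      exact hxB i (Set.mem_univ i)
  -- counting bound
  have hcount : volume (Jset n α) ≤
      (((n ^ 2).choose (4 * n) : ℝ≥0∞) * q ^ (4 * n)) * volume (bigBox n α) := by
    refine (measure_mono hsub).trans ((measure_biUnion_finset_le _ _).trans ?_)
    have hconst : ∀ S ∈ Finset.powersetCard (4 * n) (Finset.univ : Finset (Fin (n ^ 2))),
        volume (A S) = q ^ (4 * n) * volume (bigBox n α) := by
      intro S hS
      rw [hAvol S, (Finset.mem_powersetCard.mp hS).2]
    rw [Finset.sum_congr rfl hconst, Finset.sum_const, Finset.card_powersetCard,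
      Finset.card_univ, Fintype.card_fin, nsmul_eq_mul, ← mul_assoc]
  -- scalar inequality
  have hscal : (((n ^ 2).choose (4 * n) : ℝ≥0∞)) * q ^ (4 * n) < 2⁻¹ := by
    have hnat := two_mul_choose_lt n hn
    have hreal : (((n ^ 2).choose (4 * n) : ℝ)) * (1 / ((n : ℝ) + 1)) ^ (4 * n) < 1 / 2 := by
      have h1 : (0 : ℝ) < ((n : ℝ) + 1) ^ (4 * n) := by positivity
      have h2 : (2 * ((n ^ 2).choose (4 * n)) : ℝ) < ((n : ℝ) + 1) ^ (4 * n) := by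
        exact_mod_cast hnat
      rw [div_pow, one_pow, mul_div_assoc', div_lt_div_iff₀ h1 (by norm_num : (0:ℝ) < 2)]
      linarith
    calc (((n ^ 2).choose (4 * n) : ℝ≥0∞)) * q ^ (4 * n)
        = ENNReal.ofReal ((((n ^ 2).choose (4 * n) : ℝ)) * (1 / ((n : ℝ) + 1)) ^ (4 * n)) := by
          rw [hq, ← ENNReal.ofReal_pow (by positivity),
            ENNReal.ofReal_mul (by positivity), ENNReal.ofReal_natCast]
      _ < ENNReal.ofReal (1 / 2) := (ENNReal.ofReal_lt_ofReal_iff (by norm_num)).mpr hreal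
      _ = 2⁻¹ := by
          rw [one_div, ENNReal.ofReal_inv_of_pos (by norm_num : (0:ℝ) < 2)]
          norm_num
  calc volume (Jset n α)
      ≤ (((n ^ 2).choose (4 * n) : ℝ≥0∞) * q ^ (4 * n)) * volume (bigBox n α) := hcount
    _ < 2⁻¹ * volume (bigBox n α) := by
      rw [mul_comm _ (volume (bigBox n α)), mul_comm (2⁻¹ : ℝ≥0∞)]
      exact ENNReal.mul_lt_mul_right hVne hVtop hscal
end
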